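/- Let (X,𝔅,μ,T) be a measure-preserving system and let η be a ℤ-fold self-joining of μ, i.e. a probability measure on the product space (X^ℤ, 𝔅^ℤ) that is invariant under the coordinatewise map T^ℤ (defined by (T^ℤ x)_i = T(x_i)) and whose projection onto each coordinate equals μ. Then the upper metric entropy dimension of (X^ℤ, 𝔅^ℤ, η, T^ℤ) equals that of (X,𝔅,μ,T): D̄_η(X^ℤ, T^ℤ) = D̄_μ(X,T). -/

import Mathlib

open MeasureTheory Filter Set
open scoped ENNReal symmDiff

noncomputable section

namespace EntDim

/-- An increasing sequence of positive integers `S = {s 0 < s 1 < ⋯}` (0-indexed,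
so `s n` is the `(n+1)`-st element of `S`). -/
def IsPosSeq (s : ℕ → ℕ) : Prop := StrictMono s ∧ 0 < s 0

/-- `D̄(S,τ) = limsup_n n / (s_n)^τ` (with the convention that the `n`-th term,
for `n` starting at `0`, is `(n+1)/(s n)^τ`, matching the 1-indexed definition). -/
def dimExprSup (s : ℕ → ℕ) (τ : ℝ) : ℝ≥0∞ :=
  Filter.atTop.limsup fun n : ℕ => ((n : ℝ≥0∞) + 1) / (s n : ℝ≥0∞) ^ τ

/-- `D̲(S,τ) = liminf_n n / (s_n)^τ`. -/
def dimExprInf (s : ℕ → ℕ) (τ : ℝ) : ℝ≥0∞ :=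
  Filter.atTop.liminf fun n : ℕ => ((n : ℝ≥0∞) + 1) / (s n : ℝ≥0∞) ^ τ

/-- The upper dimension `D̄(S) = inf {τ ≥ 0 | D̄(S,τ) = 0}` of a sequence. -/
def upperDim (s : ℕ → ℕ) : ℝ := sInf {τ : ℝ | 0 ≤ τ ∧ dimExprSup s τ = 0}

/-- The lower dimension `D̲(S) = inf {τ ≥ 0 | D̲(S,τ) = 0}` of a sequence. -/
def lowerDim (s : ℕ → ℕ) : ℝ := sInf {τ : ℝ | 0 ≤ τ ∧ dimExprInf s τ = 0}

variable {X : Type*} [MeasurableSpace X]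

/-- `P : ι → Set X` is a finite measurable partition of `X`. -/
def IsPartition {ι : Type*} [Fintype ι] (P : ι → Set X) : Prop :=
  (∀ i, MeasurableSet (P i)) ∧ Pairwise (Function.onFun Disjoint P) ∧ (⋃ i, P i) = Set.univ

/-- The entropy `H_μ(⋁_{i ∈ F} T^{-f i} P)` of the join of the preimage partitions
`T^{-f i} P` over a finite index set `F`. -/
def finJoinEnt (μ : Measure X) (T : X → X) {ι : Type*} [Fintype ι] (P : ι → Set X)
    (f : ℕ → ℕ) (F : Finset ℕ) : ℝ :=
  ∑ ω : F → ι, Real.negMulLog (μ (⋂ i : F, T^[f i.1] ⁻¹' (P (ω i)))).toReal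

/-- `H_μ(⋁_{i=1}^{n} T^{-s_i} P)` (with `s` 0-indexed: this is the join over the
first `n` elements of the sequence). -/
def seqJoinEnt (μ : Measure X) (T : X → X) {ι : Type*} [Fintype ι] (P : ι → Set X)
    (s : ℕ → ℕ) (n : ℕ) : ℝ :=
  finJoinEnt μ T P s (Finset.range n)

/-- `S` is an entropy generating sequence of the partition `P`:
`liminf_n (1/n) H_μ(⋁_{i=1}^n T^{-s_i} P) > 0`. -/
def IsEntGenSeq (μ : Measure X) (T : X → X) {ι : Type*} [Fintype ι] (P : ι → Set X)
    (s : ℕ → ℕ) : Prop :=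
  IsPosSeq s ∧ 0 < Filter.atTop.liminf fun n : ℕ => seqJoinEnt μ T P s n / n

/-- `S` is a positive entropy sequence of the partition `P`:
`limsup_n (1/n) H_μ(⋁_{i=1}^n T^{-s_i} P) > 0`. -/
def IsPosEntSeq (μ : Measure X) (T : X → X) {ι : Type*} [Fintype ι] (P : ι → Set X)
    (s : ℕ → ℕ) : Prop :=
  IsPosSeq s ∧ 0 < Filter.atTop.limsup fun n : ℕ => seqJoinEnt μ T P s n / n

/-- `D̄^e_μ(T,P)`: the supremum of upper dimensions over entropy generating sequences
of `P` (`0`, by convention `sSup ∅ = 0`, if there are none). This is the upper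
entropy dimension `D̄_μ(T,P)` of the partition `P`. -/
def upperEntDimPart (μ : Measure X) (T : X → X) {ι : Type*} [Fintype ι]
    (P : ι → Set X) : ℝ :=
  sSup {d : ℝ | ∃ s : ℕ → ℕ, IsEntGenSeq μ T P s ∧ d = upperDim s}

/-- `D̲^e_μ(T,P)`: the supremum of lower dimensions over entropy generating sequences,
i.e. the lower entropy dimension `D̲_μ(T,P)` of the partition `P`. -/
def lowerEntDimPart (μ : Measure X) (T : X → X) {ι : Type*} [Fintype ι]
    (P : ι → Set X) : ℝ :=
  sSup {d : ℝ | ∃ s : ℕ → ℕ, IsEntGenSeq μ T P s ∧ d = lowerDim s}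

/-- `D̄^p_μ(T,P)`: the supremum of upper dimensions over positive entropy sequences of `P`. -/
def upperPosDimPart (μ : Measure X) (T : X → X) {ι : Type*} [Fintype ι]
    (P : ι → Set X) : ℝ :=
  sSup {d : ℝ | ∃ s : ℕ → ℕ, IsPosEntSeq μ T P s ∧ d = upperDim s}

/-- `D̲^p_μ(T,P)`: the supremum of lower dimensions over positive entropy sequences of `P`. -/
def lowerPosDimPart (μ : Measure X) (T : X → X) {ι : Type*} [Fintype ι]
    (P : ι → Set X) : ℝ :=
  sSup {d : ℝ | ∃ s : ℕ → ℕ, IsPosEntSeq μ T P s ∧ d = lowerDim s}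

/-- The upper metric entropy dimension `D̄_μ(X,T)`: the supremum of `D̄_μ(T,P)`
over all finite measurable partitions `P` of `X`. -/
def upperEntDim (μ : Measure X) (T : X → X) : ℝ :=
  sSup {d : ℝ | ∃ (k : ℕ) (P : Fin k → Set X), IsPartition P ∧ d = upperEntDimPart μ T P}

/-- The lower metric entropy dimension `D̲_μ(X,T)`. -/
def lowerEntDim (μ : Measure X) (T : X → X) : ℝ :=
  sSup {d : ℝ | ∃ (k : ℕ) (P : Fin k → Set X), IsPartition P ∧ d = lowerEntDimPart μ T P}

/-- `D̄^p_μ(X,T)`: the supremum of `D̄^p_μ(T,P)` over all finite measurable partitions. -/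
def upperPosDim (μ : Measure X) (T : X → X) : ℝ :=
  sSup {d : ℝ | ∃ (k : ℕ) (P : Fin k → Set X), IsPartition P ∧ d = upperPosDimPart μ T P}

/-- The two-set partition `{A, X \ A}`. -/
def pairPart (A : Set X) : Fin 2 → Set X := ![A, Aᶜ]

/-- The dimension set `Dims_μ(X,T) = {D̄_μ(T,{A,Aᶜ}) : A ∈ 𝔅, 0 < μ(A) < 1}`. -/
def dimsSet (μ : Measure X) (T : X → X) : Set ℝ :=
  {d : ℝ | ∃ A : Set X, MeasurableSet A ∧ 0 < μ A ∧ μ A < 1 ∧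
    d = upperEntDimPart μ T (pairPart A)}

/-- The system is null: every sequence entropy (along any increasing sequence of
positive integers, for any finite measurable partition) vanishes. -/
def IsNullSystem (μ : Measure X) (T : X → X) : Prop :=
  ∀ (k : ℕ) (P : Fin k → Set X), IsPartition P → ∀ s : ℕ → ℕ, IsPosSeq s →
    Filter.atTop.limsup (fun n : ℕ => seqJoinEnt μ T P s n / n) = 0

end EntDim

namespace EntDim


section Aux

set_option maxHeartbeats 1000000

open scoped Topology

variable {X : Type*} [MeasurableSpace X]

variable {Y : Type*} [MeasurableSpace Y] {ν : Measure Y}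

/-- Entropy of an indexed family of sets. -/
def ent (ν : Measure Y) {ι : Type*} [Fintype ι] (P : ι → Set Y) : ℝ :=
  ∑ i, Real.negMulLog (ν (P i)).toReal

lemma negMulLog_add_le {a b : ℝ} (ha : 0 ≤ a) (hb : 0 ≤ b) :
    Real.negMulLog (a + b) ≤ Real.negMulLog a + Real.negMulLog b := by
  rcases ha.eq_or_lt with h | h
  · simp [← h]
  rcases hb.eq_or_lt with h' | h'
  · simp [← h']
  have h1 : Real.log a ≤ Real.log (a + b) := Real.log_le_log h (by linarith)
  have h2 : Real.log b ≤ Real.log (a + b) := Real.log_le_log h' (by linarith)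
  simp only [Real.negMulLog, neg_mul]
  nlinarith

lemma negMulLog_sum_le {ι : Type*} (s : Finset ι) (x : ι → ℝ) (hx : ∀ i ∈ s, 0 ≤ x i) :
    Real.negMulLog (∑ i ∈ s, x i) ≤ ∑ i ∈ s, Real.negMulLog (x i) := by
  classical
  induction s using Finset.cons_induction with
  | empty => simp
  | cons a s ha ih =>
    rw [Finset.sum_cons, Finset.sum_cons]
    calc Real.negMulLog (x a + ∑ i ∈ s, x i)
        ≤ Real.negMulLog (x a) + Real.negMulLog (∑ i ∈ s, x i) :=
          negMulLog_add_le (hx a (Finset.mem_cons_self a s))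
            (Finset.sum_nonneg fun i hi => hx i (Finset.mem_cons_of_mem hi))
      _ ≤ Real.negMulLog (x a) + ∑ i ∈ s, Real.negMulLog (x i) := by
          gcongr
          exact ih fun i hi => hx i (Finset.mem_cons_of_mem hi)

/-- Gibbs' inequality. -/
lemma gibbs {ι : Type*} [Fintype ι] (p q : ι → ℝ) (hp : ∀ i, 0 ≤ p i) (hq : ∀ i, 0 ≤ q i)
    (hpq : ∀ i, p i ≠ 0 → q i ≠ 0) (hsum : ∑ i, q i ≤ ∑ i, p i) :
    ∑ i, Real.negMulLog (p i) ≤ ∑ i, -(p i * Real.log (q i)) := by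
  have key : ∀ i, p i * Real.log (q i) - p i * Real.log (p i) ≤ q i - p i := by
    intro i
    rcases (hp i).eq_or_lt with h | h
    · simp [← h, hq i]
    · have hqi : 0 < q i := lt_of_le_of_ne (hq i) (Ne.symm (hpq i h.ne'))
      have hlog := Real.log_le_sub_one_of_pos (div_pos hqi h)
      rw [Real.log_div hqi.ne' h.ne'] at hlog
      have h2 := mul_le_mul_of_nonneg_left hlog h.le
      calc p i * Real.log (q i) - p i * Real.log (p i)
          = p i * (Real.log (q i) - Real.log (p i)) := by ring
        _ ≤ p i * (q i / p i - 1) := h2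
        _ = q i - p i := by field_simp
  have h3 : ∑ i, (p i * Real.log (q i) - p i * Real.log (p i)) ≤ ∑ i, (q i - p i) :=
    Finset.sum_le_sum fun i _ => key i
  rw [Finset.sum_sub_distrib, Finset.sum_sub_distrib] at h3
  have e1 : ∑ i, Real.negMulLog (p i) = -∑ i, p i * Real.log (p i) := by
    simp [Real.negMulLog, neg_mul, Finset.sum_neg_distrib]
  have e2 : ∑ i, -(p i * Real.log (q i)) = -∑ i, p i * Real.log (q i) := by
    rw [Finset.sum_neg_distrib]
  rw [e1, e2]
  linarith

lemma sum_meas_inter [IsFiniteMeasure ν] {ι : Type*} [Fintype ι] {P : ι → Set Y}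
    (hP : IsPartition P) {A : Set Y} (hA : MeasurableSet A) :
    ∑ i, (ν (A ∩ P i)).toReal = (ν A).toReal := by
  classical
  have hd : Set.PairwiseDisjoint (↑(Finset.univ : Finset ι)) (fun i => A ∩ P i) := by
    intro i _ j _ hij
    exact Set.disjoint_of_subset Set.inter_subset_right Set.inter_subset_right (hP.2.1 hij)
  have hm := measure_biUnion_finset (μ := ν) hd (fun i _ => hA.inter (hP.1 i))
  have hU : ⋃ i ∈ (Finset.univ : Finset ι), A ∩ P i = A := by
    simp only [Finset.mem_univ, Set.iUnion_true, ← Set.inter_iUnion, hP.2.2, Set.inter_univ]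
  rw [hU] at hm
  rw [hm, ENNReal.toReal_sum (fun a _ => measure_ne_top ν _)]

lemma sum_meas_eq_one [IsProbabilityMeasure ν] {ι : Type*} [Fintype ι] {P : ι → Set Y}
    (hP : IsPartition P) : ∑ i, (ν (P i)).toReal = 1 := by
  have := sum_meas_inter (ν := ν) hP MeasurableSet.univ
  simpa [Set.univ_inter] using this

lemma isPartition_pi {J : Type*} [Fintype J] [DecidableEq J] {ι : J → Type*} [∀ j, Fintype (ι j)]
    {P : ∀ j, ι j → Set Y} (h : ∀ j, IsPartition (P j)) :
    IsPartition (fun ω : ∀ j, ι j => ⋂ j, P j (ω j)) := by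
  refine ⟨fun ω => MeasurableSet.iInter fun j => (h j).1 _, ?_, ?_⟩
  · intro ω ω' hne
    have hex : ∃ j, ω j ≠ ω' j := by
      by_contra hc; push_neg at hc; exact hne (funext hc)
    obtain ⟨j, hj⟩ := hex
    exact Set.disjoint_of_subset (Set.iInter_subset _ j) (Set.iInter_subset _ j) ((h j).2.1 hj)
  · ext x
    simp only [Set.mem_iUnion, Set.mem_iInter, Set.mem_univ, iff_true]
    have hx : ∀ j, ∃ a, x ∈ P j a := by
      intro j
      have h2 : x ∈ ⋃ a, P j a := (h j).2.2 ▸ Set.mem_univ x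
      simpa using h2
    choose f hf using hx
    exact ⟨f, hf⟩

lemma isPartition_prod {ι ι' : Type*} [Fintype ι] [Fintype ι'] {P : ι → Set Y}
    {P' : ι' → Set Y} (hP : IsPartition P) (hP' : IsPartition P') :
    IsPartition (fun z : ι × ι' => P z.1 ∩ P' z.2) := by
  refine ⟨fun z => (hP.1 z.1).inter (hP'.1 z.2), ?_, ?_⟩
  · rintro ⟨a, b⟩ ⟨a', b'⟩ hne
    rcases eq_or_ne a a' with rfl | ha
    · have hb : b ≠ b' := fun h => hne (by rw [h])
      exact Set.disjoint_of_subset Set.inter_subset_right Set.inter_subset_right (hP'.2.1 hb)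
    · exact Set.disjoint_of_subset Set.inter_subset_left Set.inter_subset_left (hP.2.1 ha)
  · ext x
    simp only [Set.mem_iUnion, Set.mem_inter_iff, Prod.exists, Set.mem_univ, iff_true]
    have h1 : x ∈ ⋃ i, P i := hP.2.2 ▸ Set.mem_univ x
    have h2 : x ∈ ⋃ i, P' i := hP'.2.2 ▸ Set.mem_univ x
    simp only [Set.mem_iUnion] at h1 h2
    obtain ⟨a, ha⟩ := h1; obtain ⟨b, hb⟩ := h2
    exact ⟨a, b, ha, hb⟩

lemma fiber_meas [IsFiniteMeasure ν] {J : Type*} [Fintype J] [DecidableEq J] {ι : J → Type*}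
    [∀ j, Fintype (ι j)] [∀ j, DecidableEq (ι j)] {P : ∀ j, ι j → Set Y}
    (h : ∀ j, IsPartition (P j)) (i : J) (a : ι i) :
    ∑ ω ∈ Finset.univ.filter (fun ω : ∀ j, ι j => ω i = a), (ν (⋂ j, P j (ω j))).toReal
      = (ν (P i a)).toReal := by
  classical
  have hjoint := isPartition_pi h
  have hd : Set.PairwiseDisjoint
      (↑(Finset.univ.filter (fun ω : ∀ j, ι j => ω i = a)))
      (fun ω : ∀ j, ι j => ⋂ j, P j (ω j)) := by
    intro ω _ ω' _ hne
    exact hjoint.2.1 hne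
  have hm := measure_biUnion_finset (μ := ν) hd (fun ω _ => hjoint.1 ω)
  have hU : ⋃ ω ∈ Finset.univ.filter (fun ω : ∀ j, ι j => ω i = a),
      ⋂ j, P j (ω j) = P i a := by
    ext x
    simp only [Set.mem_iUnion, Finset.mem_filter, Finset.mem_univ, true_and, Set.mem_iInter]
    constructor
    · rintro ⟨ω, hωi, hω⟩
      exact hωi ▸ hω i
    · intro hx
      have hcov : ∀ j, ∃ b, x ∈ P j b := by
        intro j
        have h2 : x ∈ ⋃ b, P j b := (h j).2.2 ▸ Set.mem_univ x
        simpa using h2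
      choose f hf using hcov
      have hfi : f i = a := by
        by_contra hne
        exact Set.disjoint_left.1 ((h i).2.1 hne) (hf i) hx
      exact ⟨f, hfi, hf⟩
  rw [hU] at hm
  rw [hm]
  exact (ENNReal.toReal_sum fun ω _ => measure_ne_top ν _).symm

lemma marginal_pi [IsFiniteMeasure ν] {J : Type*} [Fintype J] [DecidableEq J] {ι : J → Type*}
    [∀ j, Fintype (ι j)] {P : ∀ j, ι j → Set Y} (h : ∀ j, IsPartition (P j)) (i : J)
    (g : ι i → ℝ) :
    ∑ ω : ∀ j, ι j, g (ω i) * (ν (⋂ j, P j (ω j))).toReal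
      = ∑ a, g a * (ν (P i a)).toReal := by
  classical
  rw [← Finset.sum_fiberwise Finset.univ (fun ω : ∀ j, ι j => ω i)
    (fun ω => g (ω i) * (ν (⋂ j, P j (ω j))).toReal)]
  refine Finset.sum_congr rfl fun a _ => ?_
  rw [← fiber_meas h i a, Finset.mul_sum]
  refine Finset.sum_congr rfl fun ω hω => ?_
  rw [(Finset.mem_filter.1 hω).2]


lemma toReal_prob_le_one [IsProbabilityMeasure ν] (A : Set Y) : (ν A).toReal ≤ 1 := by
  have h := prob_le_one (μ := ν) (s := A)
  simpa using ENNReal.toReal_mono ENNReal.one_ne_top h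

lemma ent_nonneg [IsProbabilityMeasure ν] {ι : Type*} [Fintype ι] (P : ι → Set Y) :
    0 ≤ ent ν P :=
  Finset.sum_nonneg fun i _ =>
    Real.negMulLog_nonneg ENNReal.toReal_nonneg (toReal_prob_le_one _)

lemma nonempty_index [IsProbabilityMeasure ν] {ι : Type*} [Fintype ι] {P : ι → Set Y}
    (hP : IsPartition P) : Nonempty ι := by
  by_contra h
  rw [not_nonempty_iff] at h
  have h2 := hP.2.2
  rw [Set.iUnion_of_empty] at h2
  have : ν Set.univ = 1 := measure_univ
  rw [← h2] at this
  simp at this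

lemma ent_le_log_card [IsProbabilityMeasure ν] {ι : Type*} [Fintype ι] {P : ι → Set Y}
    (hP : IsPartition P) : ent ν P ≤ Real.log (Fintype.card ι) := by
  classical
  have hne : Nonempty ι := nonempty_index (ν := ν) hP
  have hk : (0 : ℝ) < Fintype.card ι := Nat.cast_pos.mpr Fintype.card_pos
  have hsum : ∑ _i : ι, ((Fintype.card ι : ℝ))⁻¹ ≤ ∑ i, (ν (P i)).toReal := by
    rw [sum_meas_eq_one (ν := ν) hP, Finset.sum_const]
    simp only [Finset.card_univ, nsmul_eq_mul]
    rw [mul_inv_cancel₀ hk.ne']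
  have key := gibbs (fun i => (ν (P i)).toReal) (fun _ => (Fintype.card ι : ℝ)⁻¹)
    (fun i => ENNReal.toReal_nonneg) (fun i => by positivity)
    (fun i _ => by positivity) hsum
  refine key.trans (le_of_eq ?_)
  have : ∀ i : ι, -((ν (P i)).toReal * Real.log ((Fintype.card ι : ℝ)⁻¹))
      = (ν (P i)).toReal * Real.log (Fintype.card ι) := by
    intro i
    rw [Real.log_inv]
    ring
  rw [Finset.sum_congr rfl fun i _ => this i, ← Finset.sum_mul, sum_meas_eq_one (ν := ν) hP,
    one_mul]

lemma ent_pi_le [IsProbabilityMeasure ν] {J : Type*} [Fintype J] [DecidableEq J]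
    {ι : J → Type*} [∀ j, Fintype (ι j)] {P : ∀ j, ι j → Set Y}
    (h : ∀ j, IsPartition (P j)) :
    ent ν (fun ω : ∀ j, ι j => ⋂ j, P j (ω j)) ≤ ∑ j, ent ν (P j) := by
  classical
  have hple : ∀ (ω : ∀ j, ι j) (j : J),
      (ν (⋂ j, P j (ω j))).toReal ≤ (ν (P j (ω j))).toReal := fun ω j =>
    ENNReal.toReal_mono (measure_ne_top ν _) (measure_mono (Set.iInter_subset _ j))
  have key := gibbs (fun ω : ∀ j, ι j => (ν (⋂ j, P j (ω j))).toReal)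
    (fun ω : ∀ j, ι j => ∏ j, (ν (P j (ω j))).toReal)
    (fun ω => ENNReal.toReal_nonneg)
    (fun ω => Finset.prod_nonneg fun j _ => ENNReal.toReal_nonneg)
    (fun ω hω => by
      have hpos : 0 < (ν (⋂ j, P j (ω j))).toReal :=
        lt_of_le_of_ne ENNReal.toReal_nonneg (Ne.symm hω)
      exact (Finset.prod_pos fun j _ => lt_of_lt_of_le hpos (hple ω j)).ne')
    (by
      have h1 : ∑ ω : ∀ j, ι j, ∏ j, (ν (P j (ω j))).toReal
          = ∏ j, ∑ a, (ν (P j a)).toReal :=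
        (Fintype.prod_sum fun j a => (ν (P j a)).toReal).symm
      have h2 : ∑ ω : ∀ j, ι j, (ν (⋂ j, P j (ω j))).toReal = 1 := by
        have := sum_meas_inter (ν := ν) (isPartition_pi h) MeasurableSet.univ
        simpa [Set.univ_inter] using this
      rw [h1, h2]
      refine le_of_eq ?_
      rw [Finset.prod_congr rfl fun j _ => sum_meas_eq_one (ν := ν) (h j),
        Finset.prod_const_one])
  refine key.trans (le_of_eq ?_)
  have hsplit : ∀ ω : ∀ j, ι j,
      -((ν (⋂ j, P j (ω j))).toReal * Real.log (∏ j, (ν (P j (ω j))).toReal))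
      = ∑ j, -Real.log ((ν (P j (ω j))).toReal) * (ν (⋂ j, P j (ω j))).toReal := by
    intro ω
    rcases eq_or_ne ((ν (⋂ j, P j (ω j))).toReal) 0 with h0 | h0
    · simp [h0]
    · have hfac : ∀ j ∈ Finset.univ, ((ν (P j (ω j))).toReal : ℝ) ≠ 0 := fun j _ =>
        (lt_of_lt_of_le (lt_of_le_of_ne ENNReal.toReal_nonneg (Ne.symm h0)) (hple ω j)).ne'
      rw [Real.log_prod hfac, Finset.mul_sum, ← Finset.sum_neg_distrib]
      exact Finset.sum_congr rfl fun j _ => by ring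
  calc ∑ ω : ∀ j, ι j,
        -((ν (⋂ j, P j (ω j))).toReal * Real.log (∏ j, (ν (P j (ω j))).toReal))
      = ∑ ω : ∀ j, ι j, ∑ j,
          -Real.log ((ν (P j (ω j))).toReal) * (ν (⋂ j, P j (ω j))).toReal :=
        Finset.sum_congr rfl fun ω _ => hsplit ω
    _ = ∑ j, ∑ ω : ∀ j, ι j,
          -Real.log ((ν (P j (ω j))).toReal) * (ν (⋂ j, P j (ω j))).toReal :=
        Finset.sum_comm
    _ = ∑ j, ∑ a, -Real.log ((ν (P j a)).toReal) * (ν (P j a)).toReal :=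
        Finset.sum_congr rfl fun j _ => marginal_pi h j (fun a => -Real.log ((ν (P j a)).toReal))
    _ = ∑ j, ent ν (P j) := by
        refine Finset.sum_congr rfl fun j _ => Finset.sum_congr rfl fun a _ => ?_
        simp only [Real.negMulLog, neg_mul]
        ring

lemma ent_le_of_refines [IsProbabilityMeasure ν] {ι ι' : Type*} [Fintype ι] [Fintype ι']
    {P : ι → Set Y} {P' : ι' → Set Y} (hP : IsPartition P) (hP' : IsPartition P')
    (u : ι' → ι) (hu : ∀ b, P' b ⊆ P (u b)) : ent ν P ≤ ent ν P' := by
  classical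
  have hPi : ∀ i, (ν (P i)).toReal
      = ∑ b ∈ Finset.univ.filter (fun b => u b = i), (ν (P' b)).toReal := by
    intro i
    rw [← sum_meas_inter (ν := ν) hP' (hP.1 i),
      ← Finset.sum_filter_add_sum_filter_not Finset.univ (fun b => u b = i)
        (fun b => (ν (P i ∩ P' b)).toReal)]
    have hz : ∑ b ∈ Finset.univ.filter (fun b => ¬ u b = i), (ν (P i ∩ P' b)).toReal = 0 := by
      refine Finset.sum_eq_zero fun b hb => ?_
      have hne : i ≠ u b := fun hh => (Finset.mem_filter.1 hb).2 hh.symm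
      have hsub : P i ∩ P' b ⊆ (∅ : Set Y) := fun x hx =>
        (hP.2.1 hne).le_bot ⟨hx.1, hu b hx.2⟩
      have : ν (P i ∩ P' b) = 0 := measure_mono_null hsub measure_empty
      simp [this]
    rw [hz, add_zero]
    refine Finset.sum_congr rfl fun b hb => ?_
    have hub := (Finset.mem_filter.1 hb).2
    rw [Set.inter_eq_right.2 (hub ▸ hu b)]
  calc ent ν P
      = ∑ i, Real.negMulLog (∑ b ∈ Finset.univ.filter (fun b => u b = i),
          (ν (P' b)).toReal) := Finset.sum_congr rfl fun i _ => by rw [hPi i]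
    _ ≤ ∑ i, ∑ b ∈ Finset.univ.filter (fun b => u b = i),
          Real.negMulLog ((ν (P' b)).toReal) :=
        Finset.sum_le_sum fun i _ => negMulLog_sum_le _ _ (fun b _ => ENNReal.toReal_nonneg)
    _ = ent ν P' := Finset.sum_fiberwise _ _ _


/-- Fano-type chain inequality: if each `Q i` differs little from `R i`,
the entropy of the join of the `Q i` exceeds that of the `R i` by at most
`n·φ(ε)`. -/
lemma ent_join_le_of_close [IsProbabilityMeasure ν] {J : Type*} [Fintype J] [DecidableEq J]
    {κ : Type*} [Fintype κ] [DecidableEq κ] {Q R : J → κ → Set Y}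
    (hQ : ∀ i, IsPartition (Q i)) (hR : ∀ i, IsPartition (R i)) {ε : ℝ}
    (hε0 : 0 < ε) (hε1 : ε < 1)
    (hdis : ∀ i, (ν (⋃ a, Q i a \ R i a)).toReal ≤ ε) :
    ent ν (fun ω : J → κ => ⋂ i, Q i (ω i))
      ≤ ent ν (fun ω : J → κ => ⋂ i, R i (ω i))
        + (Fintype.card J) * (Real.negMulLog ε + ε * Real.log (Fintype.card κ)
            - Real.log (1 - ε)) := by
  classical
  rcases isEmpty_or_nonempty J with hJ | hJ
  · have hent : ∀ (S : J → κ → Set Y), ent ν (fun ω : J → κ => ⋂ i, S i (ω i)) = 0 := by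
      intro S
      haveI : Unique (J → κ) := ⟨⟨fun i => hJ.elim i⟩, fun f => funext fun i => hJ.elim i⟩
      rw [ent, Fintype.sum_unique]
      simp [Set.iInter_of_empty]
    rw [hent, hent]
    simp [Fintype.card_eq_zero (α := J)]
  have hκ : Nonempty κ := nonempty_index (ν := ν) (hQ hJ.some)
  set k : ℝ := (Fintype.card κ : ℝ) with hk_def
  have hk1 : (1 : ℝ) ≤ k := Nat.one_le_cast.mpr Fintype.card_pos
  have hεk : 0 < ε / k := div_pos hε0 (by linarith)
  have h1ε : 0 < 1 - ε := by linarith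
  -- the "guess" weights
  set c : κ → κ → ℝ := fun a b => if a = b then 1 - ε else ε / k with hc_def
  have hc_pos : ∀ a b, 0 < c a b := by
    intro a b; by_cases h : a = b <;> simp [hc_def, h, h1ε, hεk]
  have hc_sum : ∀ b, ∑ a, c a b ≤ 1 := by
    intro b
    have : ∑ a, c a b = ∑ a, ((if a = b then (1 - ε) - ε / k else 0) + ε / k) := by
      refine Finset.sum_congr rfl fun a _ => ?_
      by_cases h : a = b <;> simp [hc_def, h]
    rw [this, Finset.sum_add_distrib, Finset.sum_ite_eq' Finset.univ b fun _ => (1 - ε) - ε / k,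
      Finset.sum_const]
    simp only [Finset.mem_univ, if_true, Finset.card_univ, nsmul_eq_mul]
    have hkk : k * (ε / k) = ε := by field_simp
    rw [hkk]
    linarith
  have hQp := isPartition_pi (ι := fun _ : J => κ) hQ
  have hRp := isPartition_pi (ι := fun _ : J => κ) hR
  have hprod := isPartition_prod hQp hRp
  -- step 1 : refinement
  have step1 : ent ν (fun ω : J → κ => ⋂ i, Q i (ω i))
      ≤ ent ν (fun z : (J → κ) × (J → κ) => (⋂ i, Q i (z.1 i)) ∩ ⋂ i, R i (z.2 i)) :=
    ent_le_of_refines hQp hprod Prod.fst (fun z => Set.inter_subset_left)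
  -- step 2 : Gibbs
  have hple : ∀ z : (J → κ) × (J → κ),
      (ν ((⋂ i, Q i (z.1 i)) ∩ ⋂ i, R i (z.2 i))).toReal ≤ (ν (⋂ i, R i (z.2 i))).toReal :=
    fun z => ENNReal.toReal_mono (measure_ne_top ν _) (measure_mono Set.inter_subset_right)
  have key := gibbs (fun z : (J → κ) × (J → κ) => (ν ((⋂ i, Q i (z.1 i)) ∩ ⋂ i, R i (z.2 i))).toReal)
    (fun z : (J → κ) × (J → κ) => (ν (⋂ i, R i (z.2 i))).toReal * ∏ i, c (z.1 i) (z.2 i))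
    (fun z => ENNReal.toReal_nonneg)
    (fun z => mul_nonneg ENNReal.toReal_nonneg (Finset.prod_nonneg fun i _ => (hc_pos _ _).le))
    (fun z hz => by
      have hpos : 0 < (ν ((⋂ i, Q i (z.1 i)) ∩ ⋂ i, R i (z.2 i))).toReal :=
        lt_of_le_of_ne ENNReal.toReal_nonneg (Ne.symm hz)
      exact (mul_pos (lt_of_lt_of_le hpos (hple z))
        (Finset.prod_pos fun i _ => hc_pos _ _)).ne')
    ?hsum
  case hsum =>
    have hsump : ∑ z : (J → κ) × (J → κ),
        (ν ((⋂ i, Q i (z.1 i)) ∩ ⋂ i, R i (z.2 i))).toReal = 1 := sum_meas_eq_one (ν := ν) hprod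
    rw [hsump, Fintype.sum_prod_type_right]
    calc ∑ ω₂ : J → κ, ∑ ω₁ : J → κ,
          (ν (⋂ i, R i (ω₂ i))).toReal * ∏ i, c (ω₁ i) (ω₂ i)
        ≤ ∑ ω₂ : J → κ, (ν (⋂ i, R i (ω₂ i))).toReal := by
          refine Finset.sum_le_sum fun ω₂ _ => ?_
          rw [← Finset.mul_sum]
          have hs : ∑ ω₁ : J → κ, ∏ i, c (ω₁ i) (ω₂ i) = ∏ i : J, ∑ a, c a (ω₂ i) :=
            (Fintype.prod_sum fun i a => c a (ω₂ i)).symm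
          rw [hs]
          have hp1 : ∏ i : J, ∑ a, c a (ω₂ i) ≤ 1 :=
            Finset.prod_le_one (fun i _ => Finset.sum_nonneg fun a _ => (hc_pos _ _).le)
              (fun i _ => hc_sum _)
          calc (ν (⋂ i, R i (ω₂ i))).toReal * ∏ i : J, ∑ a, c a (ω₂ i)
              ≤ (ν (⋂ i, R i (ω₂ i))).toReal * 1 := by
                exact mul_le_mul_of_nonneg_left hp1 ENNReal.toReal_nonneg
            _ = _ := mul_one _
      _ = 1 := sum_meas_eq_one (ν := ν) hRp
  -- step 3 : evaluate/bound the Gibbs RHS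
  -- marginal over the first coordinate
  have hmarg : ∀ ω₂ : J → κ, ∑ ω₁ : J → κ,
      (ν ((⋂ i, Q i (ω₁ i)) ∩ ⋂ i, R i (ω₂ i))).toReal = (ν (⋂ i, R i (ω₂ i))).toReal := by
    intro ω₂
    have := sum_meas_inter (ν := ν) hQp (hRp.1 ω₂)
    calc ∑ ω₁ : J → κ, (ν ((⋂ i, Q i (ω₁ i)) ∩ ⋂ i, R i (ω₂ i))).toReal
        = ∑ ω₁ : J → κ, (ν ((⋂ i, R i (ω₂ i)) ∩ ⋂ i, Q i (ω₁ i))).toReal := by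
          refine Finset.sum_congr rfl fun ω₁ _ => by rw [Set.inter_comm]
      _ = (ν (⋂ i, R i (ω₂ i))).toReal := this
  -- split the log
  have hsplit : ∀ z : (J → κ) × (J → κ),
      -((ν ((⋂ i, Q i (z.1 i)) ∩ ⋂ i, R i (z.2 i))).toReal
          * Real.log ((ν (⋂ i, R i (z.2 i))).toReal * ∏ i, c (z.1 i) (z.2 i)))
      = -((ν ((⋂ i, Q i (z.1 i)) ∩ ⋂ i, R i (z.2 i))).toReal
          * Real.log ((ν (⋂ i, R i (z.2 i))).toReal))
        + ∑ i, -((ν ((⋂ i, Q i (z.1 i)) ∩ ⋂ i, R i (z.2 i))).toReal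
            * Real.log (c (z.1 i) (z.2 i))) := by
    intro z
    rcases eq_or_ne ((ν ((⋂ i, Q i (z.1 i)) ∩ ⋂ i, R i (z.2 i))).toReal) 0 with h0 | h0
    · simp [h0]
    · have hRpos : ((ν (⋂ i, R i (z.2 i))).toReal : ℝ) ≠ 0 :=
        (lt_of_lt_of_le (lt_of_le_of_ne ENNReal.toReal_nonneg (Ne.symm h0)) (hple z)).ne'
      rw [Real.log_mul hRpos (Finset.prod_pos fun i _ => hc_pos _ _).ne',
        Real.log_prod (fun i _ => (hc_pos _ _).ne')]
      rw [mul_add, neg_add, Finset.mul_sum, ← Finset.sum_neg_distrib]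
  rw [Finset.sum_congr rfl fun z _ => hsplit z, Finset.sum_add_distrib] at key
  -- A-term equals ent of the R-join
  have hA : ∑ z : (J → κ) × (J → κ),
      -((ν ((⋂ i, Q i (z.1 i)) ∩ ⋂ i, R i (z.2 i))).toReal
        * Real.log ((ν (⋂ i, R i (z.2 i))).toReal))
      = ent ν (fun ω : J → κ => ⋂ i, R i (ω i)) := by
    rw [Fintype.sum_prod_type_right]
    refine Finset.sum_congr rfl fun ω₂ _ => ?_
    rw [show ∑ ω₁ : J → κ, -((ν ((⋂ i, Q i (ω₁ i)) ∩ ⋂ i, R i (ω₂ i))).toReal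
        * Real.log ((ν (⋂ i, R i (ω₂ i))).toReal))
      = -((∑ ω₁ : J → κ, (ν ((⋂ i, Q i (ω₁ i)) ∩ ⋂ i, R i (ω₂ i))).toReal)
        * Real.log ((ν (⋂ i, R i (ω₂ i))).toReal)) by
        rw [Finset.sum_mul, ← Finset.sum_neg_distrib]]
    rw [hmarg ω₂]
    simp [Real.negMulLog]
  -- B-term bound
  have hB : ∀ i : J, ∑ z : (J → κ) × (J → κ),
      -((ν ((⋂ i, Q i (z.1 i)) ∩ ⋂ i, R i (z.2 i))).toReal
        * Real.log (c (z.1 i) (z.2 i)))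
      ≤ Real.negMulLog ε + ε * Real.log k - Real.log (1 - ε) := by
    intro i
    rw [← Finset.sum_filter_add_sum_filter_not Finset.univ
      (fun z : (J → κ) × (J → κ) => z.1 i = z.2 i)]
    have hAgree : ∑ z ∈ Finset.univ.filter (fun z : (J → κ) × (J → κ) => z.1 i = z.2 i),
        -((ν ((⋂ i, Q i (z.1 i)) ∩ ⋂ i, R i (z.2 i))).toReal * Real.log (c (z.1 i) (z.2 i)))
        ≤ -Real.log (1 - ε) := by
      have hterm : ∀ z ∈ Finset.univ.filter (fun z : (J → κ) × (J → κ) => z.1 i = z.2 i),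
          -((ν ((⋂ i, Q i (z.1 i)) ∩ ⋂ i, R i (z.2 i))).toReal * Real.log (c (z.1 i) (z.2 i)))
          = (ν ((⋂ i, Q i (z.1 i)) ∩ ⋂ i, R i (z.2 i))).toReal * (-Real.log (1 - ε)) := by
        intro z hz
        rw [(Finset.mem_filter.1 hz).2]
        simp only [hc_def, if_pos rfl]
        ring
      rw [Finset.sum_congr rfl hterm, ← Finset.sum_mul]
      have hle1 : ∑ z ∈ Finset.univ.filter (fun z : (J → κ) × (J → κ) => z.1 i = z.2 i),
          (ν ((⋂ i, Q i (z.1 i)) ∩ ⋂ i, R i (z.2 i))).toReal ≤ 1 := by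
        rw [← sum_meas_eq_one (ν := ν) hprod]
        exact Finset.sum_le_sum_of_subset_of_nonneg (Finset.filter_subset _ _)
          (fun _ _ _ => ENNReal.toReal_nonneg)
      have hlog : 0 ≤ -Real.log (1 - ε) := by
        rw [neg_nonneg]
        exact Real.log_nonpos (by linarith) (by linarith)
      calc _ ≤ (1 : ℝ) * (-Real.log (1 - ε)) := by
            exact mul_le_mul_of_nonneg_right hle1 hlog
        _ = -Real.log (1 - ε) := one_mul _
    have hDis : ∑ z ∈ Finset.univ.filter (fun z : (J → κ) × (J → κ) => ¬ z.1 i = z.2 i),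
        -((ν ((⋂ i, Q i (z.1 i)) ∩ ⋂ i, R i (z.2 i))).toReal * Real.log (c (z.1 i) (z.2 i)))
        ≤ ε * (Real.log k - Real.log ε) := by
      have hterm : ∀ z ∈ Finset.univ.filter (fun z : (J → κ) × (J → κ) => ¬ z.1 i = z.2 i),
          -((ν ((⋂ i, Q i (z.1 i)) ∩ ⋂ i, R i (z.2 i))).toReal * Real.log (c (z.1 i) (z.2 i)))
          = (ν ((⋂ i, Q i (z.1 i)) ∩ ⋂ i, R i (z.2 i))).toReal
              * (Real.log k - Real.log ε) := by
        intro z hz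
        have hne := (Finset.mem_filter.1 hz).2
        simp only [hc_def, if_neg hne]
        rw [Real.log_div hε0.ne' (by linarith : k ≠ 0)]
        ring
      rw [Finset.sum_congr rfl hterm, ← Finset.sum_mul]
      have hlogk : 0 ≤ Real.log k - Real.log ε := by
        have h1 : Real.log ε ≤ 0 := Real.log_nonpos hε0.le hε1.le
        have h2 : 0 ≤ Real.log k := Real.log_nonneg hk1
        linarith
      have hmass : ∑ z ∈ Finset.univ.filter (fun z : (J → κ) × (J → κ) => ¬ z.1 i = z.2 i),
          (ν ((⋂ i, Q i (z.1 i)) ∩ ⋂ i, R i (z.2 i))).toReal ≤ ε := by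
        have hsubD : ∀ z ∈ Finset.univ.filter (fun z : (J → κ) × (J → κ) => ¬ z.1 i = z.2 i),
            (⋂ i', Q i' (z.1 i')) ∩ ⋂ i', R i' (z.2 i') ⊆ ⋃ a, Q i a \ R i a := by
          intro z hz x hx
          have hne := (Finset.mem_filter.1 hz).2
          have hxQ : x ∈ Q i (z.1 i) := Set.mem_iInter.1 hx.1 i
          have hxR : x ∈ R i (z.2 i) := Set.mem_iInter.1 hx.2 i
          refine Set.mem_iUnion.2 ⟨z.1 i, hxQ, fun hxR' => ?_⟩
          exact Set.disjoint_left.1 ((hR i).2.1 hne) hxR' hxR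
        have hd : Set.PairwiseDisjoint
            (↑(Finset.univ.filter (fun z : (J → κ) × (J → κ) => ¬ z.1 i = z.2 i)))
            (fun z : (J → κ) × (J → κ) => (⋂ i', Q i' (z.1 i')) ∩ ⋂ i', R i' (z.2 i')) := by
          intro z _ z' _ hne
          exact hprod.2.1 hne
        have hm := measure_biUnion_finset (μ := ν) hd (fun z _ => hprod.1 z)
        have hU : ν (⋃ z ∈ Finset.univ.filter (fun z : (J → κ) × (J → κ) => ¬ z.1 i = z.2 i),
            ((⋂ i', Q i' (z.1 i')) ∩ ⋂ i', R i' (z.2 i'))) ≤ ν (⋃ a, Q i a \ R i a) :=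
          measure_mono (Set.iUnion₂_subset hsubD)
        rw [hm] at hU
        calc ∑ z ∈ Finset.univ.filter (fun z : (J → κ) × (J → κ) => ¬ z.1 i = z.2 i),
            (ν ((⋂ i', Q i' (z.1 i')) ∩ ⋂ i', R i' (z.2 i'))).toReal
            = (∑ z ∈ Finset.univ.filter (fun z : (J → κ) × (J → κ) => ¬ z.1 i = z.2 i),
              ν ((⋂ i', Q i' (z.1 i')) ∩ ⋂ i', R i' (z.2 i'))).toReal :=
              (ENNReal.toReal_sum fun z _ => measure_ne_top ν _).symm
          _ ≤ (ν (⋃ a, Q i a \ R i a)).toReal :=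
              ENNReal.toReal_mono (measure_ne_top ν _) hU
          _ ≤ ε := hdis i
      exact mul_le_mul_of_nonneg_right hmass hlogk
    calc _ ≤ -Real.log (1 - ε) + ε * (Real.log k - Real.log ε) := add_le_add hAgree hDis
      _ = Real.negMulLog ε + ε * Real.log k - Real.log (1 - ε) := by
          simp only [Real.negMulLog]
          ring
  -- assemble
  have hBsum : ∑ z : (J → κ) × (J → κ), ∑ i,
      -((ν ((⋂ i, Q i (z.1 i)) ∩ ⋂ i, R i (z.2 i))).toReal * Real.log (c (z.1 i) (z.2 i)))
      ≤ (Fintype.card J) * (Real.negMulLog ε + ε * Real.log k - Real.log (1 - ε)) := by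
    rw [Finset.sum_comm]
    calc ∑ i : J, ∑ z : (J → κ) × (J → κ),
        -((ν ((⋂ i, Q i (z.1 i)) ∩ ⋂ i, R i (z.2 i))).toReal * Real.log (c (z.1 i) (z.2 i)))
        ≤ ∑ _i : J, (Real.negMulLog ε + ε * Real.log k - Real.log (1 - ε)) :=
          Finset.sum_le_sum fun i _ => hB i
      _ = (Fintype.card J) * (Real.negMulLog ε + ε * Real.log k - Real.log (1 - ε)) := by
          rw [Finset.sum_const, Finset.card_univ, nsmul_eq_mul]
  rw [hA] at key
  exact step1.trans (key.trans (by linarith))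



/-! ### Window-determined subsets of the product space -/

attribute [local instance 0] Classical.propDecidable

lemma isPartition_preimage {A B : Type*} [MeasurableSpace A] [MeasurableSpace B]
    {g : A → B} (hg : Measurable g) {ι : Type*} [Fintype ι] {P : ι → Set B}
    (hP : IsPartition P) : IsPartition (fun i => g ⁻¹' P i) :=
  ⟨fun i => hg (hP.1 i), fun i j hne => (hP.2.1 hne).preimage g, by
    rw [← Set.preimage_iUnion, hP.2.2, Set.preimage_univ]⟩

/-- The Boolean atom of the finite family `𝒮` with membership pattern `b`. -/
def atomCell (𝒮 : Finset (Set X)) (b : ↥𝒮 → Bool) : Set X :=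
  ⋂ s : ↥𝒮, if b s then (s : Set X) else (s : Set X)ᶜ

lemma mem_atomCell_iff {𝒮 : Finset (Set X)} {b : ↥𝒮 → Bool} {x : X} :
    x ∈ atomCell 𝒮 b ↔ ∀ s : ↥𝒮, (x ∈ (s : Set X) ↔ b s = true) := by
  simp only [atomCell, Set.mem_iInter]
  constructor
  · intro h s
    have hs := h s
    cases hbs : b s
    · rw [hbs] at hs
      simp only [Bool.false_eq_true, if_false] at hs
      simp only [Bool.false_eq_true, iff_false]
      exact hs
    · rw [hbs] at hs
      simp only [if_true] at hs
      simp [hs]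
  · intro h s
    cases hbs : b s
    · simp only [Bool.false_eq_true, if_false]
      intro hx
      have := (h s).1 hx
      rw [hbs] at this
      exact Bool.false_ne_true this
    · simp only [if_true]
      exact (h s).2 hbs

lemma isPartition_atomCell (𝒮 : Finset (Set X)) (hm : ∀ s ∈ 𝒮, MeasurableSet s) :
    IsPartition (atomCell 𝒮) := by
  refine ⟨fun b => MeasurableSet.iInter fun s => ?_, ?_, ?_⟩
  · by_cases hb : b s = true
    · simp only [hb, if_true]; exact hm s s.2
    · simp only [hb, if_false]; exact (hm s s.2).compl
  · intro b b' hne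
    rw [Function.onFun]
    rw [Set.disjoint_left]
    intro x hx hx'
    refine hne (funext fun s => ?_)
    have h1 := (mem_atomCell_iff.1 hx s)
    have h2 := (mem_atomCell_iff.1 hx' s)
    cases hb : b s <;> cases hb' : b' s <;> simp_all
  · ext x
    simp only [Set.mem_iUnion, Set.mem_univ, iff_true]
    refine ⟨fun s => decide (x ∈ (s : Set X)), mem_atomCell_iff.2 fun s => ?_⟩
    simp [decide_eq_true_iff]

/-- The cylinder cell over window `F` with atom pattern `w`. -/
def cellZ (F : Finset ℤ) (𝒮 : Finset (Set X)) (w : ↥F → ↥𝒮 → Bool) : Set (ℤ → X) :=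
  ⋂ j : ↥F, (fun x : ℤ → X => x (j : ℤ)) ⁻¹' atomCell 𝒮 (w j)

lemma isPartition_cellZ (F : Finset ℤ) (𝒮 : Finset (Set X))
    (hm : ∀ s ∈ 𝒮, MeasurableSet s) : IsPartition (cellZ F 𝒮) :=
  isPartition_pi (fun j : ↥F =>
    isPartition_preimage (measurable_pi_apply (j : ℤ)) (isPartition_atomCell 𝒮 hm))

/-- `A` is determined by the membership pattern of coordinates in `F`
with respect to the sets in `𝒮`. -/
def Det (F : Finset ℤ) (𝒮 : Finset (Set X)) (A : Set (ℤ → X)) : Prop :=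
  ∀ x y : ℤ → X, (∀ j ∈ F, ∀ s ∈ 𝒮, x j ∈ s ↔ y j ∈ s) → x ∈ A → y ∈ A

lemma det_empty {F : Finset ℤ} {𝒮 : Finset (Set X)} : Det F 𝒮 (∅ : Set (ℤ → X)) :=
  fun _ _ _ hx => hx.elim

lemma Det.mono {F F' : Finset ℤ} {𝒮 𝒮' : Finset (Set X)} {A : Set (ℤ → X)}
    (h : Det F 𝒮 A) (hF : F ⊆ F') (hS : 𝒮 ⊆ 𝒮') : Det F' 𝒮' A :=
  fun x y hxy => h x y (fun j hj s hs => hxy j (hF hj) s (hS hs))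

lemma Det.compl {F : Finset ℤ} {𝒮 : Finset (Set X)} {A : Set (ℤ → X)}
    (h : Det F 𝒮 A) : Det F 𝒮 Aᶜ := by
  intro x y hxy hx hy
  refine hx (h y x (fun j hj s hs => (hxy j hj s hs).symm) hy)

lemma det_iUnion {F : Finset ℤ} {𝒮 : Finset (Set X)} {ι : Sort*} {f : ι → Set (ℤ → X)}
    (h : ∀ i, Det F 𝒮 (f i)) : Det F 𝒮 (⋃ i, f i) := by
  intro x y hxy hx
  obtain ⟨i, hi⟩ := Set.mem_iUnion.1 hx
  exact Set.mem_iUnion.2 ⟨i, h i x y hxy hi⟩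

lemma det_inter {F : Finset ℤ} {𝒮 : Finset (Set X)} {A B : Set (ℤ → X)}
    (hA : Det F 𝒮 A) (hB : Det F 𝒮 B) : Det F 𝒮 (A ∩ B) :=
  fun x y hxy hx => ⟨hA x y hxy hx.1, hB x y hxy hx.2⟩

lemma det_diff {F : Finset ℤ} {𝒮 : Finset (Set X)} {A B : Set (ℤ → X)}
    (hA : Det F 𝒮 A) (hB : Det F 𝒮 B) : Det F 𝒮 (A \ B) :=
  det_inter hA hB.compl

lemma Det.of_cell {F : Finset ℤ} {𝒮 : Finset (Set X)} {A : Set (ℤ → X)}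
    (h : Det F 𝒮 A) {w : ↥F → ↥𝒮 → Bool} {x y : ℤ → X}
    (hx : x ∈ cellZ F 𝒮 w) (hy : y ∈ cellZ F 𝒮 w) (hxA : x ∈ A) : y ∈ A := by
  refine h x y (fun j hj s hs => ?_) hxA
  have hxj : x j ∈ atomCell 𝒮 (w ⟨j, hj⟩) := Set.mem_iInter.1 hx ⟨j, hj⟩
  have hyj : y j ∈ atomCell 𝒮 (w ⟨j, hj⟩) := Set.mem_iInter.1 hy ⟨j, hj⟩
  rw [mem_atomCell_iff] at hxj hyj
  rw [hxj ⟨s, hs⟩, hyj ⟨s, hs⟩]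

lemma Det.measurableSet {F : Finset ℤ} {𝒮 : Finset (Set X)} {A : Set (ℤ → X)}
    (hm : ∀ s ∈ 𝒮, MeasurableSet s) (h : Det F 𝒮 A) : MeasurableSet A := by
  have hrep : A = ⋃ w : ↥F → ↥𝒮 → Bool,
      ⋃ (_ : ∃ x ∈ cellZ F 𝒮 w, x ∈ A), cellZ F 𝒮 w := by
    ext z
    simp only [Set.mem_iUnion]
    constructor
    · intro hz
      refine ⟨fun j => fun s => decide (z (j : ℤ) ∈ (s : Set X)), ⟨z, ?_, hz⟩, ?_⟩ <;>
        · refine Set.mem_iInter.2 fun j => mem_atomCell_iff.2 fun s => ?_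
          simp [decide_eq_true_iff]
    · rintro ⟨w, ⟨x, hx, hxA⟩, hz⟩
      exact h.of_cell hx hz hxA
  rw [hrep]
  exact MeasurableSet.iUnion fun w => MeasurableSet.iUnion fun _ =>
    ((isPartition_cellZ F 𝒮 hm).1 w)

/-- Every nonempty cell of `cellZ` is contained in some member of a covering
family of `Det` sets. -/
lemma exists_cell_subset {F : Finset ℤ} {𝒮 : Finset (Set X)} {k : ℕ} {R : Fin k → Set (ℤ → X)}
    [NeZero k] (hcov : (⋃ a, R a) = Set.univ) (hdet : ∀ a, Det F 𝒮 (R a))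
    (w : ↥F → ↥𝒮 → Bool) : ∃ a, cellZ F 𝒮 w ⊆ R a := by
  by_cases hne : (cellZ F 𝒮 w).Nonempty
  · obtain ⟨x, hx⟩ := hne
    have hxc : x ∈ ⋃ a, R a := hcov ▸ Set.mem_univ x
    obtain ⟨a, ha⟩ := Set.mem_iUnion.1 hxc
    exact ⟨a, fun y hy => (hdet a).of_cell hx hy ha⟩
  · exact ⟨0, fun y hy => absurd ⟨y, hy⟩ hne⟩

/-! ### Approximation by determined sets -/

lemma exists_det_approx (η : Measure (ℤ → X)) [IsFiniteMeasure η] {B : Set (ℤ → X)}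
    (hB : MeasurableSet B) {ε : ℝ≥0∞} (hε : 0 < ε) :
    ∃ (F : Finset ℤ) (𝒮 : Finset (Set X)) (A : Set (ℤ → X)),
      (∀ s ∈ 𝒮, MeasurableSet s) ∧ Det F 𝒮 A ∧ η (A ∆ B) ≤ ε := by
  set Good : Set (ℤ → X) → Prop := fun B =>
    MeasurableSet B ∧ ∀ ε : ℝ≥0∞, 0 < ε →
      ∃ (F : Finset ℤ) (𝒮 : Finset (Set X)) (A : Set (ℤ → X)),
        (∀ s ∈ 𝒮, MeasurableSet s) ∧ Det F 𝒮 A ∧ η (A ∆ B) ≤ ε with hGood_def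
  suffices h : Good B by exact h.2 ε hε
  have hempty : Good ∅ := by
    refine ⟨MeasurableSet.empty, fun ε hε => ⟨∅, ∅, ∅, by simp, det_empty, ?_⟩⟩
    simp [symmDiff_self]
  have hcompl : ∀ C, Good C → Good Cᶜ := by
    rintro C ⟨hCm, hCa⟩
    refine ⟨hCm.compl, fun ε hε => ?_⟩
    obtain ⟨F, 𝒮, A, h1, h2, h3⟩ := hCa ε hε
    exact ⟨F, 𝒮, Aᶜ, h1, h2.compl, by rwa [compl_symmDiff_compl]⟩
  have hunion : ∀ f : ℕ → Set (ℤ → X), (∀ n, Good (f n)) → Good (⋃ n, f n) := by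
    intro f hf
    refine ⟨MeasurableSet.iUnion fun n => (hf n).1, fun ε hε => ?_⟩
    set g : ℕ → Set (ℤ → X) := fun N => ⋃ n ∈ Finset.range N, f n with hg_def
    have hgm : ∀ N, MeasurableSet (g N) :=
      fun N => MeasurableSet.biUnion (Finset.range N).countable_toSet fun n _ => (hf n).1
    have hmono : Monotone g := fun N M hNM =>
      Set.biUnion_subset_biUnion_left (Finset.coe_subset.2 (Finset.range_subset_range.2 hNM))
    have hUg : ⋃ N, g N = ⋃ n, f n := by
      ext z
      simp only [hg_def, Set.mem_iUnion, Finset.mem_range]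
      constructor
      · rintro ⟨N, n, hn, hz⟩; exact ⟨n, hz⟩
      · rintro ⟨n, hz⟩; exact ⟨n + 1, n, by omega, hz⟩
    obtain ⟨N, hN⟩ : ∃ N, η ((⋃ n, f n) \ g N) ≤ ε / 2 := by
      by_cases hle : η (⋃ n, f n) ≤ ε / 2
      · exact ⟨0, le_trans (measure_mono Set.diff_subset) hle⟩
      · push_neg at hle
        have htend := tendsto_measure_iUnion_atTop (μ := η) hmono
        rw [hUg] at htend
        have hne_top : η (⋃ n, f n) ≠ ∞ := measure_ne_top η _
        have ha0 : η (⋃ n, f n) ≠ 0 := by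
          intro h0
          rw [h0] at hle
          simp at hle
        have hε2 : ε / 2 ≠ 0 := (ENNReal.div_pos hε.ne' ENNReal.ofNat_ne_top).ne'
        have hsub_lt : η (⋃ n, f n) - ε / 2 < η (⋃ n, f n) :=
          ENNReal.sub_lt_self hne_top ha0 hε2
        have hev := htend.eventually (eventually_gt_nhds hsub_lt)
        obtain ⟨N, hN⟩ := hev.exists
        refine ⟨N, ?_⟩
        rw [measure_diff (hUg ▸ Set.subset_iUnion g N) (hgm N).nullMeasurableSet
          (measure_ne_top η _)]
        rw [tsub_le_iff_right]
        have hcancel : η (⋃ n, f n) - ε / 2 + ε / 2 = η (⋃ n, f n) :=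
          tsub_add_cancel_of_le hle.le
        calc η (⋃ n, f n) = (η (⋃ n, f n) - ε / 2) + ε / 2 := hcancel.symm
          _ ≤ η (g N) + ε / 2 := add_le_add_left hN.le _
          _ = ε / 2 + η (g N) := add_comm _ _
    set δ : ℝ≥0∞ := (ε / 2) * ((N : ℝ≥0∞) + 1)⁻¹ with hδ_def
    have hδ : 0 < δ := by
      apply ENNReal.mul_pos
      · exact (ENNReal.div_pos hε.ne' ENNReal.ofNat_ne_top).ne'
      · exact (ENNReal.inv_pos.2 (by
          refine ENNReal.add_ne_top.2 ⟨ENNReal.natCast_ne_top N, ENNReal.one_ne_top⟩)).ne'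
    choose Fa Sa Aa hma hdeta happa using fun n : ℕ => (hf n).2 δ hδ
    set Fbig := (Finset.range N).biUnion Fa with hFbig
    set Sbig := (Finset.range N).biUnion Sa with hSbig
    set Abig := ⋃ n ∈ Finset.range N, Aa n with hAbig
    refine ⟨Fbig, Sbig, Abig, ?_, ?_, ?_⟩
    · intro s hs
      obtain ⟨n, _, hn⟩ := Finset.mem_biUnion.1 hs
      exact hma n s hn
    · refine det_iUnion fun n => det_iUnion fun hn => ?_
      have hn' : n ∈ Finset.range N := by simpa using hn
      exact (hdeta n).mono (Finset.subset_biUnion_of_mem Fa hn')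
        (Finset.subset_biUnion_of_mem Sa hn')
    · have hsub : (Abig ∆ ⋃ n, f n)
          ⊆ (⋃ n ∈ Finset.range N, (Aa n ∆ f n)) ∪ ((⋃ n, f n) \ g N) := by
        intro z hz
        rw [Set.mem_symmDiff] at hz
        rcases hz with ⟨hz1, hz2⟩ | ⟨hz1, hz2⟩
        · simp only [hAbig, Set.mem_iUnion] at hz1
          obtain ⟨n, hn, hzn⟩ := hz1
          refine Set.mem_union_left _ (Set.mem_biUnion hn ?_)
          rw [Set.mem_symmDiff]
          exact Or.inl ⟨hzn, fun hzf => hz2 (Set.mem_iUnion.2 ⟨n, hzf⟩)⟩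
        · by_cases hzg : z ∈ g N
          · simp only [hg_def, Set.mem_iUnion] at hzg
            obtain ⟨n, hn, hzn⟩ := hzg
            refine Set.mem_union_left _ (Set.mem_biUnion hn ?_)
            rw [Set.mem_symmDiff]
            refine Or.inr ⟨hzn, fun hza => hz2 ?_⟩
            simp only [hAbig, Set.mem_iUnion]
            exact ⟨n, hn, hza⟩
          · exact Set.mem_union_right _ ⟨hz1, hzg⟩
      calc η (Abig ∆ ⋃ n, f n)
          ≤ η ((⋃ n ∈ Finset.range N, (Aa n ∆ f n)) ∪ ((⋃ n, f n) \ g N)) :=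
            measure_mono hsub
        _ ≤ η (⋃ n ∈ Finset.range N, (Aa n ∆ f n)) + η ((⋃ n, f n) \ g N) :=
            measure_union_le _ _
        _ ≤ (∑ n ∈ Finset.range N, η (Aa n ∆ f n)) + ε / 2 := by
            gcongr
            exact measure_biUnion_finset_le _ _
        _ ≤ (∑ _n ∈ Finset.range N, δ) + ε / 2 := by
            gcongr with n hn
            exact happa n
        _ ≤ ε / 2 + ε / 2 := by
            gcongr
            rw [Finset.sum_const, Finset.card_range, nsmul_eq_mul, hδ_def]
            calc (N : ℝ≥0∞) * (ε / 2 * ((N : ℝ≥0∞) + 1)⁻¹)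
                ≤ ((N : ℝ≥0∞) + 1) * (ε / 2 * ((N : ℝ≥0∞) + 1)⁻¹) := by
                  gcongr
                  exact le_self_add
              _ = (ε / 2) * (((N : ℝ≥0∞) + 1) * ((N : ℝ≥0∞) + 1)⁻¹) := by ring
              _ = (ε / 2) * 1 := by
                  rw [ENNReal.mul_inv_cancel (ne_of_gt (lt_of_lt_of_le zero_lt_one le_add_self)) (by
                    exact ENNReal.add_ne_top.2 ⟨ENNReal.natCast_ne_top N, ENNReal.one_ne_top⟩)]
              _ = ε / 2 := mul_one _
        _ = ε := ENNReal.add_halves ε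
  have hgen : ∀ (i : ℤ) (S : Set X), MeasurableSet S →
      Good ((fun x : ℤ → X => x i) ⁻¹' S) := by
    intro i S hS
    refine ⟨(measurable_pi_apply i) hS, fun ε hε => ?_⟩
    refine ⟨{i}, {S}, (fun x : ℤ → X => x i) ⁻¹' S, by simpa using hS, ?_, by
      simp [symmDiff_self]⟩
    intro x y hxy hx
    exact (hxy i (Finset.mem_singleton_self i) S (Finset.mem_singleton_self S)).1 hx
  let m' : MeasurableSpace (ℤ → X) :=
    { MeasurableSet' := Good
      measurableSet_empty := hempty
      measurableSet_compl := hcompl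
      measurableSet_iUnion := hunion }
  have hle : (MeasurableSpace.pi : MeasurableSpace (ℤ → X)) ≤ m' := by
    have hpi : (MeasurableSpace.pi : MeasurableSpace (ℤ → X))
        = ⨆ i : ℤ, MeasurableSpace.comap (fun x : ℤ → X => x i) inferInstance := rfl
    rw [hpi]
    refine iSup_le fun i => ?_
    rw [MeasurableSpace.le_def]
    rintro A ⟨S, hS, rfl⟩
    exact hgen i S hS
  exact MeasurableSpace.le_def.mp hle B hB



/-! ### Transfer and reindexing lemmas -/

lemma ent_congr {ι ι' : Type*} [Fintype ι] [Fintype ι'] (e : ι ≃ ι') {P : ι → Set Y}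
    {P' : ι' → Set Y} (h : ∀ i, P i = P' (e i)) : ent ν P = ent ν P' :=
  (Fintype.sum_equiv e _ _ fun i => by rw [h i]            )

lemma isPartition_comp_equiv {ι ι' : Type*} [Fintype ι] [Fintype ι'] (e : ι' ≃ ι)
    {P : ι → Set Y} (hP : IsPartition P) : IsPartition (P ∘ e) :=
  ⟨fun i => hP.1 _, fun i j hne => hP.2.1 (fun h => hne (e.injective h)), by
    rw [← hP.2.2]
    exact e.surjective.iUnion_comp P⟩


section Dims

lemma IsPosSeq.add_one_le {s : ℕ → ℕ} (hs : IsPosSeq s) : ∀ n, n + 1 ≤ s n := by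
  intro n
  induction n with
  | zero => exact hs.2
  | succ n ih => exact Nat.succ_le_of_lt (lt_of_le_of_lt ih (hs.1 (Nat.lt_succ_self n)))

lemma dimExprSup_two_eq_zero {s : ℕ → ℕ} (hs : IsPosSeq s) : dimExprSup s 2 = 0 := by
  have hsn : ∀ n : ℕ, ((n : ℝ≥0∞) + 1) ≤ (s n : ℝ≥0∞) := by
    intro n
    have := hs.add_one_le n
    exact_mod_cast (by exact_mod_cast this : ((n + 1 : ℕ) : ℝ≥0∞) ≤ (s n : ℝ≥0∞))
  have hb : ∀ n : ℕ, ((n : ℝ≥0∞) + 1) / (s n : ℝ≥0∞) ^ (2 : ℝ) ≤ ((n : ℝ≥0∞))⁻¹ := by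
    intro n
    have hpow : ((s n : ℝ≥0∞)) ^ (2 : ℝ) = ((s n : ℝ≥0∞)) ^ (2 : ℕ) := by
      rw [← ENNReal.rpow_natCast]
      norm_num
    have hn1 : ((n : ℝ≥0∞) + 1) ≠ 0 := ne_of_gt (lt_of_lt_of_le zero_lt_one le_add_self)
    have hn1' : ((n : ℝ≥0∞) + 1) ≠ ∞ :=
      ENNReal.add_ne_top.2 ⟨ENNReal.natCast_ne_top n, ENNReal.one_ne_top⟩
    have hge : ((n : ℝ≥0∞) + 1) ^ (2 : ℕ) ≤ (s n : ℝ≥0∞) ^ (2 : ℝ) := by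
      rw [hpow]
      exact pow_le_pow_left' (hsn n) 2
    have hne0 : ((s n : ℝ≥0∞)) ^ (2 : ℝ) ≠ 0 :=
      ne_of_gt (lt_of_lt_of_le (by positivity) hge)
    have hnetop : ((s n : ℝ≥0∞)) ^ (2 : ℝ) ≠ ∞ := by
      rw [hpow]
      exact ENNReal.pow_ne_top (ENNReal.natCast_ne_top _)
    rcases Nat.eq_zero_or_pos n with rfl | hn
    · simp
    have h0 : (n : ℝ≥0∞) ≠ 0 := by exact_mod_cast hn.ne'
    rw [ENNReal.div_le_iff hne0 hnetop]
    calc ((n : ℝ≥0∞) + 1) = ((n : ℝ≥0∞))⁻¹ * ((n : ℝ≥0∞) * ((n : ℝ≥0∞) + 1)) := by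
          rw [← mul_assoc, ENNReal.inv_mul_cancel h0 (ENNReal.natCast_ne_top n), one_mul]
      _ ≤ ((n : ℝ≥0∞))⁻¹ * ((s n : ℝ≥0∞) ^ (2 : ℝ)) := by
          gcongr
          calc (n : ℝ≥0∞) * ((n : ℝ≥0∞) + 1) ≤ ((n : ℝ≥0∞) + 1) * ((n : ℝ≥0∞) + 1) := by
                gcongr
                exact le_self_add
            _ = ((n : ℝ≥0∞) + 1) ^ (2 : ℕ) := (sq _).symm
            _ ≤ _ := hge
  have htend : Tendsto (fun n : ℕ => ((n : ℝ≥0∞) + 1) / (s n : ℝ≥0∞) ^ (2 : ℝ))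
      atTop (𝓝 0) :=
    tendsto_of_tendsto_of_tendsto_of_le_of_le tendsto_const_nhds
      ENNReal.tendsto_inv_nat_nhds_zero (fun n => zero_le) hb
  exact htend.limsup_eq

lemma upperDim_nonneg (s : ℕ → ℕ) : 0 ≤ upperDim s :=
  Real.sInf_nonneg fun τ hτ => hτ.1

lemma upperDim_le_two {s : ℕ → ℕ} (hs : IsPosSeq s) : upperDim s ≤ 2 :=
  csInf_le ⟨0, fun τ hτ => hτ.1⟩ ⟨by norm_num, dimExprSup_two_eq_zero hs⟩

/-- A liminf comparison helper. -/
lemma liminf_pos_aux {u v : ℕ → ℝ} {A φ : ℝ} (hA : 0 < A) (hφ : 0 ≤ φ)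
    (h : ∀ n, u n ≤ A * v n + φ) (hu0 : ∀ n, 0 ≤ u n)
    {Cv : ℝ} (hvC : ∀ n, v n ≤ Cv)
    (hc : φ < atTop.liminf u) : 0 < atTop.liminf v := by
  have hu_bdd : IsBoundedUnder (· ≥ ·) atTop u :=
    Filter.isBoundedUnder_of ⟨0, hu0⟩
  set c := atTop.liminf u with hc_def
  have hmid : (φ + c) / 2 < c := by linarith
  have hev : ∀ᶠ n in atTop, (φ + c) / 2 < u n := eventually_lt_of_lt_liminf hmid hu_bdd
  have hb : 0 < ((φ + c) / 2 - φ) / A := div_pos (by linarith) hA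
  have hevv : ∀ᶠ n in atTop, ((φ + c) / 2 - φ) / A ≤ v n := by
    filter_upwards [hev] with n hn
    have h2 := h n
    rw [div_le_iff₀ hA]
    nlinarith
  have hle := le_liminf_of_le (isCoboundedUnder_ge_of_le atTop fun n => hvC n) hevv
  exact lt_of_lt_of_le hb hle


end Dims

section Glue

variable {X : Type*} [MeasurableSpace X]

lemma upperEntDimPart_nonneg (μ : Measure X) (T : X → X) {ι : Type*} [Fintype ι]
    (P : ι → Set X) : 0 ≤ upperEntDimPart μ T P :=
  Real.sSup_nonneg fun d hd => by
    obtain ⟨s, _, rfl⟩ := hd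
    exact upperDim_nonneg s

lemma upperEntDimPart_le_two (μ : Measure X) (T : X → X) {ι : Type*} [Fintype ι]
    (P : ι → Set X) : upperEntDimPart μ T P ≤ 2 :=
  Real.sSup_le (fun d hd => by
    obtain ⟨s, hs, rfl⟩ := hd
    exact upperDim_le_two hs.1) (by norm_num)

lemma bddAbove_entGen (μ : Measure X) (T : X → X) {ι : Type*} [Fintype ι]
    (P : ι → Set X) :
    BddAbove {d : ℝ | ∃ s : ℕ → ℕ, IsEntGenSeq μ T P s ∧ d = upperDim s} :=
  ⟨2, fun d hd => by
    obtain ⟨s, hs, rfl⟩ := hd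
    exact upperDim_le_two hs.1⟩

lemma bddAbove_entDim (μ : Measure X) (T : X → X) :
    BddAbove {d : ℝ | ∃ (k : ℕ) (P : Fin k → Set X), IsPartition P ∧
      d = upperEntDimPart μ T P} :=
  ⟨2, fun d hd => by
    obtain ⟨k, P, hP, rfl⟩ := hd
    exact upperEntDimPart_le_two μ T P⟩

lemma upperEntDim_nonneg (μ : Measure X) (T : X → X) : 0 ≤ upperEntDim μ T :=
  Real.sSup_nonneg fun d hd => by
    obtain ⟨k, P, hP, rfl⟩ := hd
    exact upperEntDimPart_nonneg μ T P

lemma seqJoinEnt_nonneg (ν : Measure X) [IsProbabilityMeasure ν] (T : X → X)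
    {ι : Type*} [Fintype ι] (P : ι → Set X) (s : ℕ → ℕ) (n : ℕ) :
    0 ≤ seqJoinEnt ν T P s n :=
  Finset.sum_nonneg fun ω _ =>
    Real.negMulLog_nonneg ENNReal.toReal_nonneg (toReal_prob_le_one _)

lemma seqJoinEnt_div_le_log_card (ν : Measure X) [IsProbabilityMeasure ν] {T : X → X}
    (hT : Measurable T) {ι : Type*} [Fintype ι] {P : ι → Set X} (hP : IsPartition P)
    (s : ℕ → ℕ) (n : ℕ) :
    seqJoinEnt ν T P s n / n ≤ Real.log (Fintype.card ι) := by
  have hne : Nonempty ι := nonempty_index (ν := ν) hP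
  have hlog0 : 0 ≤ Real.log (Fintype.card ι) :=
    Real.log_nonneg (by exact_mod_cast Fintype.card_pos (α := ι))
  rcases Nat.eq_zero_or_pos n with rfl | hn
  · simpa using hlog0
  have h1 : seqJoinEnt ν T P s n
      ≤ Real.log (Fintype.card (↥(Finset.range n) → ι)) := by
    exact ent_le_log_card (isPartition_pi fun i : ↥(Finset.range n) =>
      isPartition_preimage (hT.iterate _) hP)
  rw [Fintype.card_fun, Fintype.card_coe, Finset.card_range] at h1
  rw [Nat.cast_pow, Real.log_pow] at h1
  have hn' : (0 : ℝ) < n := by exact_mod_cast hn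
  rw [div_le_iff₀ hn']
  calc seqJoinEnt ν T P s n ≤ (n : ℕ) * Real.log (Fintype.card ι) := h1
    _ = Real.log (Fintype.card ι) * (n : ℝ) := by push_cast; ring

lemma finJoinEnt_comp_equiv (ν : Measure X) (T : X → X)
    {ι ι' : Type*} [Fintype ι] [Fintype ι'] (e : ι' ≃ ι) (P : ι → Set X)
    (f : ℕ → ℕ) (F : Finset ℕ) :
    finJoinEnt ν T (P ∘ e) f F = finJoinEnt ν T P f F := by
  refine Fintype.sum_equiv (Equiv.arrowCongr (Equiv.refl ↥F) e) _ _ fun ω => ?_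
  congr 1

lemma iterate_apply_comm (T : X → X) : ∀ (m : ℕ) (x : ℤ → X) (j : ℤ),
    ((fun (x : ℤ → X) (i : ℤ) => T (x i))^[m] x) j = T^[m] (x j) := by
  intro m
  induction m with
  | zero => intro x j; rfl
  | succ m ih =>
    intro x j
    rw [Function.iterate_succ_apply, Function.iterate_succ_apply]
    exact ih _ j

lemma finJoinEnt_pullback (μ : Measure X) {T : X → X} (hT : Measurable T)
    (η : Measure (ℤ → X)) (hmarg : ∀ i : ℤ, η.map (fun x : ℤ → X => x i) = μ)
    {ι : Type*} [Fintype ι] {P : ι → Set X} (hP : ∀ i, MeasurableSet (P i)) (j : ℤ)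
    (f : ℕ → ℕ) (F : Finset ℕ) :
    finJoinEnt η (fun (x : ℤ → X) (i : ℤ) => T (x i))
      (fun a => (fun x : ℤ → X => x j) ⁻¹' P a) f F = finJoinEnt μ T P f F := by
  refine Finset.sum_congr rfl fun ω _ => ?_
  have hcell : (⋂ i : ↥F, (fun (x : ℤ → X) (i : ℤ) => T (x i))^[f i.1] ⁻¹'
      ((fun x : ℤ → X => x j) ⁻¹' P (ω i)))
      = (fun x : ℤ → X => x j) ⁻¹' (⋂ i : ↥F, T^[f i.1] ⁻¹' P (ω i)) := by
    ext x
    simp only [Set.mem_iInter, Set.mem_preimage]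
    refine forall_congr' fun i => ?_
    rw [iterate_apply_comm]
  have hmeas : MeasurableSet (⋂ i : ↥F, T^[f i.1] ⁻¹' P (ω i)) :=
    MeasurableSet.iInter fun i => (hT.iterate _) (hP _)
  have : η (⋂ i : ↥F, (fun (x : ℤ → X) (i : ℤ) => T (x i))^[f i.1] ⁻¹'
      ((fun x : ℤ → X => x j) ⁻¹' P (ω i))) = μ (⋂ i : ↥F, T^[f i.1] ⁻¹' P (ω i)) := by
    rw [hcell, ← hmarg j, Measure.map_apply (measurable_pi_apply j) hmeas]
  rw [this]

lemma det_union {F : Finset ℤ} {𝒮 : Finset (Set X)} {A B : Set (ℤ → X)}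
    (hA : Det F 𝒮 A) (hB : Det F 𝒮 B) : Det F 𝒮 (A ∪ B) := fun x y hxy hx =>
  hx.elim (fun h => Or.inl (hA x y hxy h)) (fun h => Or.inr (hB x y hxy h))

end Glue

section Key

variable {X : Type*} [MeasurableSpace X]

lemma key_upperDim_le (μ : Measure X) [IsProbabilityMeasure μ] (T : X → X)
    (hT : Measurable T) (η : Measure (ℤ → X)) [IsProbabilityMeasure η]
    (hinv : MeasurePreserving (fun (x : ℤ → X) (i : ℤ) => T (x i)) η η)
    (hmarg : ∀ i : ℤ, η.map (fun x : ℤ → X => x i) = μ)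
    {k : ℕ} {Q : Fin k → Set (ℤ → X)} (hQ : IsPartition Q) {s : ℕ → ℕ}
    (hs : IsEntGenSeq η (fun (x : ℤ → X) (i : ℤ) => T (x i)) Q s) :
    upperDim s ≤ upperEntDim μ T := by
  classical
  have hTzm : Measurable (fun (x : ℤ → X) (i : ℤ) => T (x i)) := hinv.measurable
  set Tz := fun (x : ℤ → X) (i : ℤ) => T (x i) with hTz_def
  set c := atTop.liminf (fun n : ℕ => seqJoinEnt η Tz Q s n / n) with hc_def
  have hc0 : 0 < c := hs.2
  have hk0 : 0 < k := Fin.pos_iff_nonempty.2 (nonempty_index (ν := η) hQ)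
  -- choose ε
  obtain ⟨ε, hε0, hε1, hφlt⟩ : ∃ ε : ℝ, 0 < ε ∧ ε < 1 ∧
      Real.negMulLog ε + ε * Real.log k - Real.log (1 - ε) < c / 2 := by
    have hcont : ContinuousAt (fun ε : ℝ => Real.negMulLog ε + ε * Real.log k
        - Real.log (1 - ε)) 0 := by
      refine ContinuousAt.sub (ContinuousAt.add ?_ ?_) ?_
      · exact Real.continuous_negMulLog.continuousAt
      · exact (continuous_id.mul continuous_const).continuousAt
      · have h1 : ContinuousAt Real.log ((fun ε : ℝ => 1 - ε) 0) :=
          Real.continuousAt_log (by norm_num)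
        exact h1.comp (by fun_prop)
    have htend := hcont.tendsto
    have h0 : Real.negMulLog 0 + 0 * Real.log k - Real.log (1 - 0) = 0 := by simp
    rw [h0] at htend
    have hev1 := htend.eventually (eventually_lt_nhds (show (0:ℝ) < c / 2 by positivity))
    have hev2 : ∀ᶠ ε in 𝓝 (0 : ℝ), ε < 1 := eventually_lt_nhds (by norm_num)
    have hev3 : ∀ᶠ ε in 𝓝[>] (0 : ℝ), 0 < ε := self_mem_nhdsWithin
    obtain ⟨ε, h12, h3⟩ :=
      (((hev1.and hev2).filter_mono nhdsWithin_le_nhds).and hev3).exists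
    exact ⟨ε, h3, h12.2, h12.1⟩
  have hφ0 : 0 ≤ Real.negMulLog ε + ε * Real.log k - Real.log (1 - ε) := by
    have h1 : 0 ≤ Real.negMulLog ε := Real.negMulLog_nonneg hε0.le hε1.le
    have h2 : 0 ≤ ε * Real.log k := mul_nonneg hε0.le (Real.log_natCast_nonneg k)
    have h3 : Real.log (1 - ε) ≤ 0 := Real.log_nonpos (by linarith) (by linarith)
    linarith
  -- approximation of the partition by determined sets
  set δ : ℝ≥0∞ := ENNReal.ofReal ε / (k : ℝ≥0∞) with hδ_def
  have hδ0 : 0 < δ :=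
    ENNReal.div_pos (ENNReal.ofReal_pos.2 hε0).ne' (ENNReal.natCast_ne_top k)
  choose Fa Sa Ba hma hdeta happa using fun a : Fin k => exists_det_approx η (hQ.1 a) hδ0
  set F := Finset.univ.biUnion Fa with hF_def
  set 𝒮 := Finset.univ.biUnion Sa with hS_def
  have hm𝒮 : ∀ s' ∈ 𝒮, MeasurableSet s' := by
    intro s' hs'
    obtain ⟨a, _, ha⟩ := Finset.mem_biUnion.1 hs'
    exact hma a s' ha
  have hdetB : ∀ a, Det F 𝒮 (Ba a) := fun a =>
    (hdeta a).mono (Finset.subset_biUnion_of_mem Fa (Finset.mem_univ a))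
      (Finset.subset_biUnion_of_mem Sa (Finset.mem_univ a))
  -- the disjointified cylinder partition R
  set R : Fin k → Set (ℤ → X) := fun a =>
    (Ba a \ ⋃ (a' : Fin k), ⋃ (_ : a' < a), Ba a')
      ∪ (if a = ⟨0, hk0⟩ then (⋃ a', Ba a')ᶜ else ∅) with hR_def
  have hmemR : ∀ (x : ℤ → X) (a : Fin k), x ∈ R a ↔
      ((x ∈ Ba a ∧ ∀ a' : Fin k, a' < a → x ∉ Ba a') ∨
        (a = ⟨0, hk0⟩ ∧ ∀ a' : Fin k, x ∉ Ba a')) := by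
    intro x a
    rw [hR_def]
    simp only [Set.mem_union, Set.mem_diff, Set.mem_iUnion, not_exists]
    constructor
    · rintro (⟨h1, h2⟩ | h3)
      · exact Or.inl ⟨h1, fun a' ha' => h2 a' ha'⟩
      · by_cases ha : a = ⟨0, hk0⟩
        · rw [if_pos ha] at h3
          exact Or.inr ⟨ha, by simpa using h3⟩
        · rw [if_neg ha] at h3
          exact absurd h3 (Set.notMem_empty x)
    · rintro (⟨h1, h2⟩ | ⟨h1, h2⟩)
      · exact Or.inl ⟨h1, h2⟩
      · rw [if_pos h1]
        refine Or.inr ?_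
        simpa using h2
  have hdetR : ∀ a, Det F 𝒮 (R a) := by
    intro a
    refine det_union (det_diff (hdetB a)
      (det_iUnion fun a' => det_iUnion fun _ => hdetB a')) ?_
    by_cases ha : a = ⟨0, hk0⟩
    · rw [if_pos ha]; exact (det_iUnion fun a' => hdetB a').compl
    · rw [if_neg ha]; exact det_empty
  have hRpart : IsPartition R := by
    refine ⟨fun a => ((hdetR a).measurableSet hm𝒮), ?_, ?_⟩
    · intro a a' hne
      rw [Function.onFun, Set.disjoint_left]
      intro x hx hx'
      rw [hmemR] at hx hx'
      rcases hx with ⟨hx1, hx2⟩ | ⟨hx1, hx2⟩ <;>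
        rcases hx' with ⟨hy1, hy2⟩ | ⟨hy1, hy2⟩
      · rcases lt_or_gt_of_ne hne with h | h
        · exact hy2 a h hx1
        · exact hx2 a' h hy1
      · exact hy2 a hx1
      · exact hx2 a' hy1
      · exact hne (hx1.trans hy1.symm)
    · ext x
      simp only [Set.mem_iUnion, Set.mem_univ, iff_true]
      by_cases hxB : ∃ a, x ∈ Ba a
      · set t := Finset.univ.filter (fun a' : Fin k => x ∈ Ba a') with ht_def
        have ht : t.Nonempty := by
          obtain ⟨a, ha⟩ := hxB
          exact ⟨a, by simp [ht_def, ha]⟩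
        refine ⟨t.min' ht, (hmemR x _).2 (Or.inl ⟨?_, ?_⟩)⟩
        · exact (Finset.mem_filter.1 (t.min'_mem ht)).2
        · intro a' hlt hmem
          exact absurd (t.min'_le a' (by simp [ht_def, hmem])) (not_le.2 hlt)
      · push_neg at hxB
        exact ⟨⟨0, hk0⟩, (hmemR x _).2 (Or.inr ⟨rfl, hxB⟩)⟩
  -- the disagreement set is small
  have hDmeas : MeasurableSet (⋃ a, Q a \ R a) :=
    MeasurableSet.iUnion fun a => (hQ.1 a).diff ((hdetR a).measurableSet hm𝒮)
  have hD : (η (⋃ a, Q a \ R a)).toReal ≤ ε := by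
    have hDsub : (⋃ a, Q a \ R a) ⊆ ⋃ a, (Ba a ∆ Q a) := by
      intro x hx
      obtain ⟨a, hxQ, hxR⟩ := Set.mem_iUnion.1 hx
      by_cases hxB : ∃ a', x ∈ Ba a'
      · set t := Finset.univ.filter (fun a' : Fin k => x ∈ Ba a') with ht_def
        have ht : t.Nonempty := by
          obtain ⟨a', ha'⟩ := hxB
          exact ⟨a', by simp [ht_def, ha']⟩
        set a0 := t.min' ht with ha0_def
        have hxa0 : x ∈ R a0 := (hmemR x _).2 (Or.inl ⟨
          (Finset.mem_filter.1 (t.min'_mem ht)).2,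
          fun a' hlt hmem =>
            absurd (t.min'_le a' (by simp [ht_def, hmem])) (not_le.2 hlt)⟩)
        have hne : a0 ≠ a := fun h => hxR (h ▸ hxa0)
        have hxQa0 : x ∉ Q a0 := fun h =>
          Set.disjoint_left.1 (hQ.2.1 hne) h hxQ
        exact Set.mem_iUnion.2 ⟨a0, Set.mem_symmDiff.2 (Or.inl
          ⟨(Finset.mem_filter.1 (t.min'_mem ht)).2, hxQa0⟩)⟩
      · push_neg at hxB
        by_cases ha : a = ⟨0, hk0⟩
        · exact absurd ((hmemR x a).2 (Or.inr ⟨ha, hxB⟩)) hxR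
        · exact Set.mem_iUnion.2 ⟨a, Set.mem_symmDiff.2 (Or.inr ⟨hxQ, hxB a⟩)⟩
    have h1 : η (⋃ a, Q a \ R a) ≤ ENNReal.ofReal ε := by
      calc η (⋃ a, Q a \ R a) ≤ η (⋃ a, (Ba a ∆ Q a)) := measure_mono hDsub
        _ ≤ ∑ a : Fin k, η (Ba a ∆ Q a) := by
            have hb := measure_biUnion_finset_le (μ := η) (Finset.univ : Finset (Fin k))
              (fun a => Ba a ∆ Q a)
            simpa using hb
        _ ≤ ∑ _a : Fin k, δ := Finset.sum_le_sum fun a _ => happa a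
        _ = (k : ℝ≥0∞) * δ := by
            rw [Finset.sum_const, Finset.card_univ, Fintype.card_fin, nsmul_eq_mul]
        _ ≤ ENNReal.ofReal ε := ENNReal.mul_div_le
    exact ENNReal.toReal_le_of_le_ofReal hε0.le h1
  -- choice of a cell-to-R assignment
  haveI : NeZero k := ⟨hk0.ne'⟩
  choose u hu using fun w => exists_cell_subset (R := R) hRpart.2.2 hdetR w
  -- the main chain of inequalities
  have hchain : ∀ n : ℕ, seqJoinEnt η Tz Q s n
      ≤ (F.card : ℝ) * seqJoinEnt μ T (atomCell 𝒮) s n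
        + n * (Real.negMulLog ε + ε * Real.log k - Real.log (1 - ε)) := by
    intro n
    set g : ↥(Finset.range n) → (ℤ → X) → (ℤ → X) := fun i => Tz^[s i.1] with hg_def
    have hgm : ∀ i, Measurable (g i) := fun i => hTzm.iterate _
    have hQi : ∀ i, IsPartition (fun a => g i ⁻¹' Q a) :=
      fun i => isPartition_preimage (hgm i) hQ
    have hRi : ∀ i, IsPartition (fun a => g i ⁻¹' R a) :=
      fun i => isPartition_preimage (hgm i) hRpart
    have hdis : ∀ i, (η (⋃ a, g i ⁻¹' Q a \ g i ⁻¹' R a)).toReal ≤ ε := by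
      intro i
      have hpre : (⋃ a, g i ⁻¹' Q a \ g i ⁻¹' R a) = g i ⁻¹' (⋃ a, Q a \ R a) := by
        rw [Set.preimage_iUnion]
        simp [Set.preimage_diff]
      rw [hpre, (hinv.iterate (s i.1)).measure_preimage hDmeas.nullMeasurableSet]
      exact hD
    have hstepA := ent_join_le_of_close (ν := η) hQi hRi hε0 hε1 hdis
    rw [Fintype.card_fin] at hstepA
    have hcardJ : (Fintype.card ↥(Finset.range n) : ℝ) = (n : ℝ) := by
      rw [Fintype.card_coe, Finset.card_range]
    rw [hcardJ] at hstepA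
    have hGi : IsPartition (cellZ F 𝒮) := isPartition_cellZ F 𝒮 hm𝒮
    have hGji : ∀ i : ↥(Finset.range n), IsPartition (fun w => g i ⁻¹' cellZ F 𝒮 w) :=
      fun i => isPartition_preimage (hgm i) hGi
    have hstepB : ent η (fun ω : ↥(Finset.range n) → Fin k => ⋂ i, g i ⁻¹' R (ω i))
        ≤ ent η (fun ω : ↥(Finset.range n) → (↥F → ↥𝒮 → Bool) =>
            ⋂ i, g i ⁻¹' cellZ F 𝒮 (ω i)) :=
      ent_le_of_refines (isPartition_pi hRi) (isPartition_pi hGji)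
        (fun ω => fun i => u (ω i))
        (fun ω => Set.iInter_mono fun i => Set.preimage_mono (hu (ω i)))
    have hstepC : ent η (fun ω : ↥(Finset.range n) → (↥F → ↥𝒮 → Bool) =>
        ⋂ i, g i ⁻¹' cellZ F 𝒮 (ω i))
        ≤ ∑ j : ↥F, ent η (fun ω : ↥(Finset.range n) → (↥𝒮 → Bool) =>
            ⋂ i, g i ⁻¹' ((fun x : ℤ → X => x ((j : ℤ))) ⁻¹' atomCell 𝒮 (ω i))) := by
      have hswap : ent η (fun ω : ↥(Finset.range n) → (↥F → ↥𝒮 → Bool) =>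
          ⋂ i, g i ⁻¹' cellZ F 𝒮 (ω i))
          = ent η (fun w : ↥F → (↥(Finset.range n) → (↥𝒮 → Bool)) => ⋂ j : ↥F,
              ⋂ i, g i ⁻¹' ((fun x : ℤ → X => x ((j : ℤ))) ⁻¹' atomCell 𝒮 (w j i))) := by
        refine ent_congr (Equiv.piComm fun _ _ => (↥𝒮 → Bool)) fun ω => ?_
        ext x
        simp only [cellZ, Set.mem_iInter, Set.mem_preimage, Equiv.piComm,
          Equiv.coe_fn_mk, Function.swap]
        exact ⟨fun h j i => h i j, fun h i j => h j i⟩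
      rw [hswap]
      exact ent_pi_le
        (P := fun (j : ↥F) (ωJ : ↥(Finset.range n) → (↥𝒮 → Bool)) =>
          ⋂ i, g i ⁻¹' ((fun x : ℤ → X => x ((j : ℤ))) ⁻¹' atomCell 𝒮 (ωJ i)))
        (fun j => isPartition_pi fun i => isPartition_preimage (hgm i)
          (isPartition_preimage (measurable_pi_apply _) (isPartition_atomCell 𝒮 hm𝒮)))
    have hstepD : ∀ j : ↥F, ent η (fun ω : ↥(Finset.range n) → (↥𝒮 → Bool) =>
        ⋂ i, g i ⁻¹' ((fun x : ℤ → X => x ((j : ℤ))) ⁻¹' atomCell 𝒮 (ω i)))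
        = seqJoinEnt μ T (atomCell 𝒮) s n := fun j =>
      finJoinEnt_pullback μ hT η hmarg
        (fun b => (isPartition_atomCell 𝒮 hm𝒮).1 b) (j : ℤ) s (Finset.range n)
    calc seqJoinEnt η Tz Q s n
        = ent η (fun ω : ↥(Finset.range n) → Fin k => ⋂ i, g i ⁻¹' Q (ω i)) := rfl
      _ ≤ ent η (fun ω : ↥(Finset.range n) → Fin k => ⋂ i, g i ⁻¹' R (ω i))
          + n * (Real.negMulLog ε + ε * Real.log k - Real.log (1 - ε)) := hstepA
      _ ≤ (∑ j : ↥F, ent η (fun ω : ↥(Finset.range n) → (↥𝒮 → Bool) =>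
            ⋂ i, g i ⁻¹' ((fun x : ℤ → X => x ((j : ℤ))) ⁻¹' atomCell 𝒮 (ω i))))
          + n * (Real.negMulLog ε + ε * Real.log k - Real.log (1 - ε)) := by
          gcongr
          exact hstepB.trans hstepC
      _ = (F.card : ℝ) * seqJoinEnt μ T (atomCell 𝒮) s n
          + n * (Real.negMulLog ε + ε * Real.log k - Real.log (1 - ε)) := by
          rw [Finset.sum_congr rfl fun j _ => hstepD j, Finset.sum_const,
            Finset.card_univ, Fintype.card_coe, nsmul_eq_mul]
  -- conclude : the atom partition is entropy generating for (X, μ, T)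
  set A : ℝ := max (F.card : ℝ) 1 with hA_def
  have hA1 : (1 : ℝ) ≤ A := le_max_right _ _
  have hA0 : (0 : ℝ) < A := lt_of_lt_of_le zero_lt_one hA1
  have hptwise : ∀ n : ℕ, seqJoinEnt η Tz Q s n / n
      ≤ A * (seqJoinEnt μ T (atomCell 𝒮) s n / n)
        + (Real.negMulLog ε + ε * Real.log k - Real.log (1 - ε)) := by
    intro n
    rcases Nat.eq_zero_or_pos n with rfl | hn
    · simp only [Nat.cast_zero, div_zero, mul_zero]
      linarith
    · have hn' : (0 : ℝ) < n := by exact_mod_cast hn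
      rw [div_le_iff₀ hn']
      have h2 : (F.card : ℝ) * seqJoinEnt μ T (atomCell 𝒮) s n
          ≤ A * seqJoinEnt μ T (atomCell 𝒮) s n :=
        mul_le_mul_of_nonneg_right (le_max_left _ _)
          (seqJoinEnt_nonneg μ T (atomCell 𝒮) s n)
      calc seqJoinEnt η Tz Q s n
          ≤ (F.card : ℝ) * seqJoinEnt μ T (atomCell 𝒮) s n
            + n * (Real.negMulLog ε + ε * Real.log k - Real.log (1 - ε)) := hchain n
        _ ≤ A * seqJoinEnt μ T (atomCell 𝒮) s n
            + n * (Real.negMulLog ε + ε * Real.log k - Real.log (1 - ε)) := by linarith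
        _ = (A * (seqJoinEnt μ T (atomCell 𝒮) s n / n)
            + (Real.negMulLog ε + ε * Real.log k - Real.log (1 - ε))) * n := by
            field_simp
  have hgen : IsEntGenSeq μ T (atomCell 𝒮) s := by
    refine ⟨hs.1, ?_⟩
    refine liminf_pos_aux hA0 hφ0 hptwise
      (fun n => div_nonneg (seqJoinEnt_nonneg η Tz Q s n) (Nat.cast_nonneg n))
      (Cv := Real.log (Fintype.card (↥𝒮 → Bool)))
      (fun n => seqJoinEnt_div_le_log_card μ hT (isPartition_atomCell 𝒮 hm𝒮) s n) ?_
    calc Real.negMulLog ε + ε * Real.log k - Real.log (1 - ε) < c / 2 := hφlt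
      _ < c := by linarith
  -- transport to a `Fin`-indexed partition
  set K := Fintype.card (↥𝒮 → Bool) with hK_def
  set e : Fin K ≃ (↥𝒮 → Bool) := (Fintype.equivFin (↥𝒮 → Bool)).symm with he_def
  have hγpart : IsPartition (atomCell 𝒮 ∘ e) :=
    isPartition_comp_equiv e (isPartition_atomCell 𝒮 hm𝒮)
  have hgen' : IsEntGenSeq μ T (atomCell 𝒮 ∘ e) s := by
    refine ⟨hs.1, ?_⟩
    have heq : (fun n : ℕ => seqJoinEnt μ T (atomCell 𝒮 ∘ e) s n / n)
        = fun n : ℕ => seqJoinEnt μ T (atomCell 𝒮) s n / n := by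
      funext n
      rw [show seqJoinEnt μ T (atomCell 𝒮 ∘ e) s n = seqJoinEnt μ T (atomCell 𝒮) s n
        from finJoinEnt_comp_equiv μ T e (atomCell 𝒮) s (Finset.range n)]
    rw [heq]
    exact hgen.2
  calc upperDim s ≤ upperEntDimPart μ T (atomCell 𝒮 ∘ e) :=
        le_csSup (bddAbove_entGen μ T _) ⟨s, hgen', rfl⟩
    _ ≤ upperEntDim μ T :=
        le_csSup (bddAbove_entDim μ T) ⟨K, atomCell 𝒮 ∘ e, hγpart, rfl⟩

end Key

end Aux


/-- If `η` is a ℤ-fold self-joining of `(X,𝔅,μ,T)` — a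
`T^ℤ`-invariant probability measure on `X^ℤ` all of whose coordinate marginals are
`μ` — then `D̄_η(X^ℤ, T^ℤ) = D̄_μ(X,T)`. -/
theorem upperEntDim_selfJoining {X : Type*} [MeasurableSpace X]
    (μ : Measure X) [IsProbabilityMeasure μ] (T : X → X) (hT : MeasurePreserving T μ μ)
    (η : Measure (ℤ → X)) [IsProbabilityMeasure η]
    (hinv : MeasurePreserving (fun (x : ℤ → X) (i : ℤ) => T (x i)) η η)
    (hmarg : ∀ i : ℤ, η.map (fun x : ℤ → X => x i) = μ) :
    upperEntDim η (fun (x : ℤ → X) (i : ℤ) => T (x i)) = upperEntDim μ T := by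
  classical
  have hTm : Measurable T := hT.measurable
  apply le_antisymm
  · refine Real.sSup_le ?_ (upperEntDim_nonneg μ T)
    rintro d ⟨k, Q, hQ, rfl⟩
    refine Real.sSup_le ?_ (upperEntDim_nonneg μ T)
    rintro d' ⟨s, hs, rfl⟩
    exact key_upperDim_le μ T hTm η hinv hmarg hQ hs
  · refine Real.sSup_le ?_ (upperEntDim_nonneg η _)
    rintro d ⟨k, P, hP, rfl⟩
    have hP' : IsPartition (fun a => (fun x : ℤ → X => x (0 : ℤ)) ⁻¹' P a) :=
      isPartition_preimage (measurable_pi_apply (0 : ℤ)) hP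
    have hJE : ∀ (s : ℕ → ℕ) (n : ℕ), seqJoinEnt η (fun (x : ℤ → X) (i : ℤ) => T (x i))
        (fun a => (fun x : ℤ → X => x (0 : ℤ)) ⁻¹' P a) s n = seqJoinEnt μ T P s n :=
      fun s n => finJoinEnt_pullback μ hTm η hmarg hP.1 0 s (Finset.range n)
    have heq : upperEntDimPart μ T P
        = upperEntDimPart η (fun (x : ℤ → X) (i : ℤ) => T (x i))
            (fun a => (fun x : ℤ → X => x (0 : ℤ)) ⁻¹' P a) := by
      unfold upperEntDimPart
      congr 1
      ext d'
      refine exists_congr fun s => and_congr_left' (and_congr_right fun _ => ?_)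
      rw [show (fun n : ℕ => seqJoinEnt μ T P s n / (n : ℝ))
          = (fun n : ℕ => seqJoinEnt η (fun (x : ℤ → X) (i : ℤ) => T (x i))
              (fun a => (fun x : ℤ → X => x (0 : ℤ)) ⁻¹' P a) s n / (n : ℝ))
        from funext fun n => by rw [hJE s n]]
    rw [heq]
    exact le_csSup (bddAbove_entDim η _) ⟨k, _, hP', rfl⟩


end EntDim
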